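/- arXiv:quant-ph/0603199 — 10 statements merged into one kernel-verified Lean document; each statement's English description precedes it below -/
import Mathlib

section
/- Every separable state σ ∈ S_{M,N} can be written as a convex combination of M²N² pure product states: there exist real numbers p_i ≥ 0 with Σ_{i=1}^{M²N²} p_i = 1, unit vectors a_i ∈ ℂ^M and b_i ∈ ℂ^N, such that σ = Σ_{i=1}^{M²N²} p_i (a_i a_iᴴ) ⊗ (b_i b_iᴴ). -/
open scoped Matrix Kronecker BigOperators

/-- The rank-one matrix `a aᴴ` with `(j,k)` entry `a j * conj (a k)`. -/
noncomputable def outer {M : ℕ} (a : Fin M → ℂ) : Matrix (Fin M) (Fin M) ℂ :=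
  Matrix.vecMulVec a (fun k => (starRingEnd ℂ) (a k))

/-- The pure product density matrix `(a aᴴ) ⊗ (b bᴴ)`. -/
noncomputable def prodState {M N : ℕ} (a : Fin M → ℂ) (b : Fin N → ℂ) :
    Matrix (Fin M × Fin N) (Fin M × Fin N) ℂ :=
  outer a ⊗ₖ outer b

/-- `a` is a unit vector (squared Euclidean norm equal to 1). -/
def unitVec {M : ℕ} (a : Fin M → ℂ) : Prop := ∑ j, Complex.normSq (a j) = 1

/-- The set of separable states: the real convex hull of pure product density matrices. -/
noncomputable def SepSet (M N : ℕ) : Set (Matrix (Fin M × Fin N) (Fin M × Fin N) ℂ) :=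
  convexHull ℝ { X | ∃ a b, unitVec a ∧ unitVec b ∧ X = prodState a b }

lemma outer_herm {M : ℕ} (a : Fin M → ℂ) : (outer a)ᴴ = outer a := by
  ext j k
  simp [outer, Matrix.conjTranspose_apply, Matrix.vecMulVec_apply, mul_comm]

lemma outer_trace {M : ℕ} {a : Fin M → ℂ} (h : unitVec a) : (outer a).trace = 1 := by
  have : (outer a).trace = ((∑ j, Complex.normSq (a j) : ℝ) : ℂ) := by
    simp [Matrix.trace, outer, Matrix.vecMulVec_apply, Matrix.diag, Complex.mul_conj]
  rw [this, h]; norm_num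

lemma prodState_herm {M N : ℕ} (a : Fin M → ℂ) (b : Fin N → ℂ) :
    (prodState a b)ᴴ = prodState a b := by
  ext ⟨j1, j2⟩ ⟨k1, k2⟩
  have h1 := congrFun (congrFun (outer_herm a) j1) k1
  have h2 := congrFun (congrFun (outer_herm b) j2) k2
  simp only [Matrix.conjTranspose_apply] at h1 h2
  simp only [prodState, Matrix.conjTranspose_apply, Matrix.kroneckerMap_apply, star_mul',
    h1, h2]

lemma prodState_trace {M N : ℕ} {a : Fin M → ℂ} {b : Fin N → ℂ}
    (ha : unitVec a) (hb : unitVec b) : (prodState a b).trace = 1 := by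
  rw [prodState, Matrix.trace_kronecker, outer_trace ha, outer_trace hb, mul_one]

noncomputable def hermTraceless (M N : ℕ) :
    Submodule ℝ (Matrix (Fin M × Fin N) (Fin M × Fin N) ℂ) where
  carrier := {X | Xᴴ = X ∧ X.trace = 0}
  add_mem' := by
    rintro X Y ⟨h1, h2⟩ ⟨h3, h4⟩
    exact ⟨by simp [Matrix.conjTranspose_add, h1, h3], by simp [Matrix.trace_add, h2, h4]⟩
  zero_mem' := by simp
  smul_mem' := by
    rintro r X ⟨h1, h2⟩
    refine ⟨?_, by simp [Matrix.trace_smul, h2]⟩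
    rw [Matrix.conjTranspose_smul, h1, star_trivial]

noncomputable def coordMap (M N : ℕ) :
    Matrix (Fin M × Fin N) (Fin M × Fin N) ℂ →ₗ[ℝ]
      ((Fin M × Fin N) × (Fin M × Fin N) → ℝ) where
  toFun X := fun p =>
    if finProdFinEquiv p.1 < finProdFinEquiv p.2 then (X p.1 p.2).re
    else if finProdFinEquiv p.2 < finProdFinEquiv p.1 then (X p.1 p.2).im
    else (X p.1 p.2).re
  map_add' X Y := by
    funext p
    by_cases h1 : finProdFinEquiv p.1 < finProdFinEquiv p.2 <;>
      by_cases h2 : finProdFinEquiv p.2 < finProdFinEquiv p.1 <;>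
        simp [h1, h2, Matrix.add_apply]
  map_smul' r X := by
    funext p
    by_cases h1 : finProdFinEquiv p.1 < finProdFinEquiv p.2 <;>
      by_cases h2 : finProdFinEquiv p.2 < finProdFinEquiv p.1 <;>
        simp [h1, h2, Matrix.smul_apply, Complex.smul_re, Complex.smul_im]

lemma coordMap_apply (M N : ℕ) (X : Matrix (Fin M × Fin N) (Fin M × Fin N) ℂ)
    (p : (Fin M × Fin N) × (Fin M × Fin N)) :
    coordMap M N X p =
      if finProdFinEquiv p.1 < finProdFinEquiv p.2 then (X p.1 p.2).re
      else if finProdFinEquiv p.2 < finProdFinEquiv p.1 then (X p.1 p.2).im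
      else (X p.1 p.2).re := rfl

lemma finrank_hermTraceless_le (M N : ℕ) (hM : 1 ≤ M) (hN : 1 ≤ N) :
    Module.finrank ℝ (hermTraceless M N) ≤ M ^ 2 * N ^ 2 - 1 := by
  set x₀ : Fin M × Fin N := (⟨0, hM⟩, ⟨0, hN⟩) with hx₀
  set z : (Fin M × Fin N) × (Fin M × Fin N) := (x₀, x₀) with hz
  set f : (hermTraceless M N) →ₗ[ℝ] ({q : (Fin M × Fin N) × (Fin M × Fin N) // q ≠ z} → ℝ) :=
    (LinearMap.funLeft ℝ ℝ Subtype.val).comp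
      ((coordMap M N).comp (hermTraceless M N).subtype) with hf
  have hinj : Function.Injective f := by
    rw [← LinearMap.ker_eq_bot, LinearMap.ker_eq_bot']
    rintro ⟨X, hH, htr⟩ hfX
    have hco : ∀ q : (Fin M × Fin N) × (Fin M × Fin N), q ≠ z → coordMap M N X q = 0 := by
      intro q hq
      exact congrFun hfX ⟨q, hq⟩
    have herm : ∀ j k, (starRingEnd ℂ) (X k j) = X j k := by
      intro j k
      have := congrFun (congrFun hH j) k
      simp [Matrix.conjTranspose_apply] at this
      exact this
    have key : ∀ j k, j ≠ k → X j k = 0 := by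
      intro j k hjk
      have hz1 : (j, k) ≠ z := by
        simp only [hz, ne_eq, Prod.mk.injEq, not_and]
        intro h1 h2; exact hjk (h1.trans h2.symm)
      have hz2 : (k, j) ≠ z := by
        simp only [hz, ne_eq, Prod.mk.injEq, not_and]
        intro h1 h2; exact hjk (h2.trans h1.symm)
      have h1 := hco (j, k) hz1
      have h2 := hco (k, j) hz2
      rw [coordMap_apply] at h1 h2
      rcases lt_trichotomy (finProdFinEquiv j) (finProdFinEquiv k) with hlt | heq | hgt
      · rw [if_pos hlt] at h1
        rw [if_neg (asymm hlt), if_pos hlt] at h2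
        have him : (X j k).im = 0 := by
          rw [← herm j k, Complex.conj_im, h2, neg_zero]
        exact Complex.ext h1 him
      · exact absurd (finProdFinEquiv.injective heq) hjk
      · rw [if_neg (asymm hgt), if_pos hgt] at h1
        rw [if_pos hgt] at h2
        have hre : (X j k).re = 0 := by
          rw [← herm j k, Complex.conj_re, h2]
        exact Complex.ext hre h1
    have diag_im : ∀ j, (X j j).im = 0 := by
      intro j
      have := herm j j
      have := congrArg Complex.im this
      simp only [Complex.conj_im] at this
      linarith
    have key2 : ∀ j, j ≠ x₀ → X j j = 0 := by
      intro j hj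
      have hz1 : (j, j) ≠ z := by
        simp only [hz, ne_eq, Prod.mk.injEq, not_and]
        intro h1; exact absurd h1 hj
      have h1 := hco (j, j) hz1
      rw [coordMap_apply, if_neg (lt_irrefl _), if_neg (lt_irrefl _)] at h1
      exact Complex.ext h1 (diag_im j)
    have hdiag0 : X x₀ x₀ = 0 := by
      have : X.trace = X x₀ x₀ := by
        rw [Matrix.trace]
        exact Finset.sum_eq_single_of_mem x₀ (Finset.mem_univ _)
          (fun i _ hi => key2 i hi)
      rw [htr] at this
      exact this.symm
    have : X = 0 := by
      ext j k
      by_cases hjk : j = k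
      · subst hjk
        by_cases hj : j = x₀
        · subst hj; simpa using hdiag0
        · simpa using key2 j hj
      · simpa using key j k hjk
    exact Subtype.ext this
  have hle := LinearMap.finrank_le_finrank_of_injective hinj
  have hcard : Fintype.card {q : (Fin M × Fin N) × (Fin M × Fin N) // q ≠ z}
      = M ^ 2 * N ^ 2 - 1 := by
    have : Fintype.card {q : (Fin M × Fin N) × (Fin M × Fin N) // q ≠ z}
        = Fintype.card ((Fin M × Fin N) × (Fin M × Fin N)) - 1 := by
      simp [Fintype.card_subtype_compl (· = z)]
    rw [this]
    simp [Fintype.card_prod]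
    ring_nf
  rw [Module.finrank_fintype_fun_eq_card, hcard] at hle
  exact hle

lemma sum_extend {β : Type*} [AddCommMonoid β] {c m : ℕ} (h : c ≤ m) (F : Fin c → β) :
    (∑ i : Fin m, if hi : (i : ℕ) < c then F ⟨i, hi⟩ else 0) = ∑ j : Fin c, F j := by
  have h1 : (∑ i : Fin m, if hi : (i : ℕ) < c then F ⟨i, hi⟩ else 0)
      = ∑ n ∈ Finset.range m, (if hn : n < c then F ⟨n, hn⟩ else 0) :=
    Fin.sum_univ_eq_sum_range (fun n => if hn : n < c then F ⟨n, hn⟩ else 0) m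
  have h2 : (∑ j : Fin c, F j)
      = ∑ n ∈ Finset.range c, (if hn : n < c then F ⟨n, hn⟩ else 0) := by
    rw [← Fin.sum_univ_eq_sum_range (fun n => if hn : n < c then F ⟨n, hn⟩ else 0) c]
    exact Finset.sum_congr rfl (fun j _ => by rw [dif_pos j.isLt])
  rw [h1, h2]
  refine (Finset.sum_subset (Finset.range_subset_range.mpr h) ?_).symm
  intro x _ hx
  rw [dif_neg (by simpa using hx)]


theorem separable_is_convex_combination_of_MsqNsq_pure_products
    (M N : ℕ) (hM : 1 ≤ M) (hN : 1 ≤ N)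
    (σ : Matrix (Fin M × Fin N) (Fin M × Fin N) ℂ) (hσ : σ ∈ SepSet M N) :
    ∃ (p : Fin (M ^ 2 * N ^ 2) → ℝ) (a : Fin (M ^ 2 * N ^ 2) → Fin M → ℂ)
      (b : Fin (M ^ 2 * N ^ 2) → Fin N → ℂ),
      (∀ i, 0 ≤ p i) ∧ (∑ i, p i = 1) ∧ (∀ i, unitVec (a i)) ∧ (∀ i, unitVec (b i)) ∧
      σ = ∑ i, p i • prodState (a i) (b i) := by
  classical
  rw [SepSet, convexHull_eq_union] at hσ
  simp only [Set.mem_iUnion] at hσ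
  obtain ⟨t, hts, hai, hmem⟩ := hσ
  have htne : t.Nonempty := by
    rcases Finset.eq_empty_or_nonempty t with rfl | h
    · simp at hmem
    · exact h
  haveI : Nonempty ↥t := ⟨⟨htne.choose, htne.choose_spec⟩⟩
  have hWle : vectorSpan ℝ (↑t : Set (Matrix (Fin M × Fin N) (Fin M × Fin N) ℂ))
      ≤ hermTraceless M N := by
    rw [vectorSpan_def, Submodule.span_le]
    rintro v ⟨x, hx, y, hy, rfl⟩
    obtain ⟨ax, bx, hax, hbx, rfl⟩ := hts hx
    obtain ⟨ay, by', hay, hby, rfl⟩ := hts hy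
    constructor
    · simp [vsub_eq_sub, Matrix.conjTranspose_sub, prodState_herm]
    · simp [vsub_eq_sub, Matrix.trace_sub, prodState_trace hax hbx, prodState_trace hay hby]
  have hcard : t.card ≤ M ^ 2 * N ^ 2 := by
    have h1 := hai.finrank_vectorSpan_add_one
    rw [Fintype.card_coe] at h1
    have hrange : Set.range (Subtype.val : ↥t → Matrix (Fin M × Fin N) (Fin M × Fin N) ℂ)
        = ↑t := by ext x; simp
    have h2 : Module.finrank ℝ
        (vectorSpan ℝ (Set.range (Subtype.val : ↥t → Matrix (Fin M × Fin N) (Fin M × Fin N) ℂ)))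
        ≤ M ^ 2 * N ^ 2 - 1 :=
      le_trans (Submodule.finrank_mono (by rw [hrange]; exact hWle))
        (finrank_hermTraceless_le M N hM hN)
    have hpos : 1 ≤ M ^ 2 * N ^ 2 :=
      Nat.one_le_iff_ne_zero.mpr (by positivity)
    obtain ⟨K, hK⟩ : ∃ K, M ^ 2 * N ^ 2 = K := ⟨_, rfl⟩
    rw [hK] at h2 hpos ⊢
    omega
  rw [Finset.convexHull_eq] at hmem
  obtain ⟨w, hw0, hw1, hcm⟩ := hmem
  have hσ_eq : σ = ∑ y ∈ t, w y • y := by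
    rw [← hcm, Finset.centerMass_eq_of_sum_1 _ _ hw1]
    simp
  choose A B hA hB hAB using fun y : ↥t => hts y.2
  set c := t.card with hc
  let e : Fin c ≃ ↥t := ((Fintype.equivFin ↥t).trans (finCongr (Fintype.card_coe t))).symm
  let e₀ : Fin M → ℂ := fun j => if j = ⟨0, hM⟩ then 1 else 0
  let f₀ : Fin N → ℂ := fun j => if j = ⟨0, hN⟩ then 1 else 0
  have he₀ : unitVec e₀ := by
    simp [unitVec, e₀, apply_ite Complex.normSq, Finset.sum_ite_eq']
  have hf₀ : unitVec f₀ := by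
    simp [unitVec, f₀, apply_ite Complex.normSq, Finset.sum_ite_eq']
  refine ⟨fun i => if hi : (i : ℕ) < c then w ↑(e ⟨i, hi⟩) else 0,
    fun i => if hi : (i : ℕ) < c then A (e ⟨i, hi⟩) else e₀,
    fun i => if hi : (i : ℕ) < c then B (e ⟨i, hi⟩) else f₀, ?_, ?_, ?_, ?_, ?_⟩
  · intro i
    dsimp only
    by_cases hi : (i : ℕ) < c
    · rw [dif_pos hi]; exact hw0 _ (e ⟨i, hi⟩).2
    · rw [dif_neg hi]
  · rw [sum_extend hcard (fun j => w ↑(e j)), Equiv.sum_comp e (fun y : ↥t => w ↑y),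
      Finset.sum_coe_sort t w, hw1]
  · intro i
    dsimp only
    by_cases hi : (i : ℕ) < c
    · rw [dif_pos hi]; exact hA _
    · rw [dif_neg hi]; exact he₀
  · intro i
    dsimp only
    by_cases hi : (i : ℕ) < c
    · rw [dif_pos hi]; exact hB _
    · rw [dif_neg hi]; exact hf₀
  · have hterm : ∀ i : Fin (M ^ 2 * N ^ 2),
        (if hi : (i : ℕ) < c then w ↑(e ⟨i, hi⟩) else 0) •
          prodState (if hi : (i : ℕ) < c then A (e ⟨i, hi⟩) else e₀)
            (if hi : (i : ℕ) < c then B (e ⟨i, hi⟩) else f₀)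
        = if hi : (i : ℕ) < c then
            w ↑(e ⟨i, hi⟩) • prodState (A (e ⟨i, hi⟩)) (B (e ⟨i, hi⟩)) else 0 := by
      intro i
      by_cases hi : (i : ℕ) < c
      · simp only [dif_pos hi]
      · simp only [dif_neg hi, zero_smul]
    rw [Finset.sum_congr rfl (fun i _ => hterm i),
      sum_extend hcard (fun j => w ↑(e j) • prodState (A (e j)) (B (e j))),
      Equiv.sum_comp e (fun y : ↥t => w ↑y • prodState (A y) (B y))]
    have : ∀ y : ↥t, w ↑y • prodState (A y) (B y) = w ↑y • (y : Matrix (Fin M × Fin N) (Fin M × Fin N) ℂ) := by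
      intro y; rw [← hAB y]
    rw [Finset.sum_congr rfl (fun y _ => this y),
      Finset.sum_coe_sort t (fun y => w y • y)]
    exact hσ_eq
end

section
/- Let O be a Hermitian n×n complex matrix (n ≥ 1) and let α ∈ ℝ satisfy 0 < α ≤ 1. If tr(O²) = α² and tr(O³) = α³, then tr(O) = α and O has rank 1 (i.e., O corresponds to an unnormalized pure state). -/
open Matrix

theorem trace_eq_and_rank_one_of_trace_sq_cube
    (n : ℕ) (hn : 1 ≤ n) (O : Matrix (Fin n) (Fin n) ℂ) (hO : O.IsHermitian)
    (α : ℝ) (hα0 : 0 < α) (hα1 : α ≤ 1)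
    (h2 : Matrix.trace (O ^ 2) = (α : ℂ) ^ 2)
    (h3 : Matrix.trace (O ^ 3) = (α : ℂ) ^ 3) :
    Matrix.trace O = (α : ℂ) ∧ O.rank = 1 := by
  classical
  set U : Matrix (Fin n) (Fin n) ℂ := (hO.eigenvectorUnitary : Matrix (Fin n) (Fin n) ℂ) with hUdef
  set D : Matrix (Fin n) (Fin n) ℂ :=
    Matrix.diagonal (RCLike.ofReal ∘ hO.eigenvalues) with hDdef
  have hsU : star U * U = 1 := by
    simp [hUdef]
  have hUs : U * star U = 1 := by
    simp [hUdef]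
  have hspec : O = U * D * star U := hO.spectral_theorem
  have hpow : ∀ k : ℕ, O ^ k = U * D ^ k * star U := by
    intro k
    induction k with
    | zero => simpa using hUs.symm
    | succ k ih =>
      rw [pow_succ, ih, hspec, pow_succ]
      have hstep : star U * (U * D * star U) = D * star U := by
        rw [← Matrix.mul_assoc, ← Matrix.mul_assoc, hsU, Matrix.one_mul]
      rw [Matrix.mul_assoc (U * D ^ k), hstep]
      simp only [Matrix.mul_assoc]
  set f := hO.eigenvalues with hfdef
  have htr : ∀ k : ℕ, Matrix.trace (O ^ k) = ∑ i, ((f i : ℂ)) ^ k := by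
    intro k
    rw [hpow k, Matrix.trace_mul_cycle, hsU, Matrix.one_mul,
      hDdef, Matrix.diagonal_pow, Matrix.trace_diagonal]
    simp [Function.comp]
  have hr2 : ∑ i, (f i) ^ 2 = α ^ 2 := by
    have hc : ((∑ i, f i ^ 2 : ℝ) : ℂ) = ((α ^ 2 : ℝ) : ℂ) := by
      push_cast
      rw [← htr 2]; exact h2
    exact_mod_cast hc
  have hr3 : ∑ i, (f i) ^ 3 = α ^ 3 := by
    have hc : ((∑ i, f i ^ 3 : ℝ) : ℂ) = ((α ^ 3 : ℝ) : ℂ) := by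
      push_cast
      rw [← htr 3]; exact h3
    exact_mod_cast hc
  -- each eigenvalue is ≤ α
  have hle : ∀ i, f i ≤ α := by
    intro i
    have h1 : f i ^ 2 ≤ α ^ 2 := by
      rw [← hr2]
      exact Finset.single_le_sum (f := fun i => f i ^ 2) (fun j _ => sq_nonneg _)
        (Finset.mem_univ i)
    nlinarith
  -- each eigenvalue is 0 or α
  have hdichot : ∀ i, f i = 0 ∨ f i = α := by
    have hnonneg : ∀ i ∈ Finset.univ, 0 ≤ α * f i ^ 2 - f i ^ 3 := by
      intro i _
      have := hle i
      nlinarith [sq_nonneg (f i)]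
    have hzero : ∑ i, (α * f i ^ 2 - f i ^ 3) = 0 := by
      rw [Finset.sum_sub_distrib, ← Finset.mul_sum, hr2, hr3]; ring
    have := (Finset.sum_eq_zero_iff_of_nonneg hnonneg).mp hzero
    intro i
    have hi := this i (Finset.mem_univ i)
    have : f i ^ 2 * (α - f i) = 0 := by nlinarith
    rcases mul_eq_zero.mp this with h | h
    · left; exact pow_eq_zero_iff (two_ne_zero) |>.mp h
    · right; linarith
  set s : Finset (Fin n) := Finset.univ.filter (fun i => f i ≠ 0) with hsdef
  have hmem : ∀ i ∈ s, f i = α := by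
    intro i hi
    rcases hdichot i with h | h
    · exact absurd h (Finset.mem_filter.mp hi).2
    · exact h
  have hsum2 : ∑ i, f i ^ 2 = s.card * α ^ 2 := by
    rw [← Finset.sum_filter_add_sum_filter_not Finset.univ (fun i => f i ≠ 0)]
    have h1 : ∑ i ∈ s, f i ^ 2 = s.card * α ^ 2 := by
      rw [Finset.sum_congr rfl (fun i hi => by rw [hmem i hi]), Finset.sum_const,
        nsmul_eq_mul]
    have h2' : ∑ i ∈ Finset.univ.filter (fun i => ¬ f i ≠ 0), f i ^ 2 = 0 := by
      apply Finset.sum_eq_zero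
      intro i hi
      have := (Finset.mem_filter.mp hi).2
      simp only [ne_eq, not_not] at this
      rw [this]; ring
    rw [h1, h2', add_zero]
  have hcard : s.card = 1 := by
    have : (s.card : ℝ) * α ^ 2 = α ^ 2 := by rw [← hsum2, hr2]
    have hα2 : α ^ 2 ≠ 0 := by positivity
    have h1 : (s.card : ℝ) * α ^ 2 = 1 * α ^ 2 := by rw [one_mul]; exact this
    have := mul_right_cancel₀ hα2 h1
    exact_mod_cast this
  constructor
  · have htrO : Matrix.trace O = ∑ i, (f i : ℂ) := by
      have := htr 1
      simpa using this
    have hsumf : ∑ i, f i = α := by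
      rw [← Finset.sum_filter_add_sum_filter_not Finset.univ (fun i => f i ≠ 0)]
      have h1 : ∑ i ∈ s, f i = α := by
        rw [Finset.sum_congr rfl (fun i hi => hmem i hi), Finset.sum_const, hcard]
        simp
      have h2' : ∑ i ∈ Finset.univ.filter (fun i => ¬ f i ≠ 0), f i = 0 := by
        apply Finset.sum_eq_zero
        intro i hi
        have := (Finset.mem_filter.mp hi).2
        simpa using this
      rw [h1, h2', add_zero]
    rw [htrO, ← hsumf]
    push_cast
    rfl
  · rw [hO.rank_eq_card_non_zero_eigs]
    rw [Fintype.card_subtype]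
    exact hcard
end

section
/- Let M, N ≥ 1, set k = M²N², and let p ≥ 1 be an integer. For i = 1,…,k let p_i ∈ [0,1] with Σ_i p_i = 1, and let α_i ∈ ℂ^M, β_i ∈ ℂ^N be unit vectors; set σ = Σ_i p_i (α_i α_iᴴ) ⊗ (β_i β_iᴴ). Suppose p̃_i ∈ [0,1] and vectors α̃_i ∈ ℂ^M, β̃_i ∈ ℂ^N satisfy: |p_i − p̃_i| ≤ 2^{−p}; and, componentwise, the real part and the imaginary part of each entry of α̃_i (respectively β̃_i) differ from the corresponding real/imaginary part of the entry of α_i (respectively β_i) by at most 2^{−p} in absolute value, and each such real/imaginary part of α̃_i and β̃_i has absolute value at most 1. Then ‖σ − σ̃‖₂ < M³N³ · 2^{−(p−7.5)}, where σ̃ = Σ_i p̃_i (α̃_i α̃_iᴴ) ⊗ (β̃_i β̃_iᴴ). -/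
open scoped Matrix Kronecker BigOperators

/-- The Frobenius (Hilbert–Schmidt) norm `√(tr(Xᴴ X))`. -/
noncomputable def frobNorm {n : Type*} [Fintype n] (X : Matrix n n ℂ) : ℝ :=
  Real.sqrt ((Matrix.trace (Xᴴ * X)).re)

lemma aux_abs_mul_le {x y : ℂ} {a b : ℝ} (hx : ‖x‖ ≤ a) (hy : ‖y‖ ≤ b) :
    ‖(x * y)‖ ≤ a * b := by
  rw [norm_mul]
  exact mul_le_mul hx hy (norm_nonneg _) (le_trans (norm_nonneg _) hx)

lemma aux_frob_eq {n : Type*} [Fintype n] (X : Matrix n n ℂ) :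
    (Matrix.trace (Xᴴ * X)).re = ∑ c, ∑ r, Complex.normSq (X r c) := by
  simp [Matrix.trace, Matrix.diag, Matrix.mul_apply, Matrix.conjTranspose_apply,
    Complex.normSq_eq_conj_mul_self, Complex.re_sum, Complex.normSq_apply]

lemma aux_telescope5 (q qt : ℝ) (A B C D A' B' C' D' : ℂ) (ε : ℝ)
    (hqt : |qt| ≤ 1) (hqd : |q - qt| ≤ ε)
    (hA : ‖A‖ ≤ 1) (hB : ‖B‖ ≤ 1)
    (hC : ‖C‖ ≤ 1) (hD : ‖D‖ ≤ 1)
    (hA' : ‖A'‖ ≤ 2) (hB' : ‖B'‖ ≤ 2)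
    (hC' : ‖C'‖ ≤ 2)
    (hAd : ‖(A - A')‖ ≤ 2 * ε) (hBd : ‖(B - B')‖ ≤ 2 * ε)
    (hCd : ‖(C - C')‖ ≤ 2 * ε) (hDd : ‖(D - D')‖ ≤ 2 * ε) :
    ‖((q : ℂ) * (A * B * (C * D)) - (qt : ℂ) * (A' * B' * (C' * D')))‖ ≤ 31 * ε := by
  have key : (q : ℂ) * (A * B * (C * D)) - (qt : ℂ) * (A' * B' * (C' * D'))
      = ((q - qt : ℝ) : ℂ) * (A * (B * (C * D)))
        + (qt : ℂ) * ((A - A') * (B * (C * D)))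
        + (qt : ℂ) * (A' * ((B - B') * (C * D)))
        + (qt : ℂ) * (A' * (B' * ((C - C') * D)))
        + (qt : ℂ) * (A' * (B' * (C' * (D - D')))) := by push_cast; ring
  rw [key]
  have t1 : ‖(((q - qt : ℝ) : ℂ) * (A * (B * (C * D))))‖ ≤ ε * (1 * (1 * (1 * 1))) :=
    aux_abs_mul_le (by rwa [Complex.norm_real, Real.norm_eq_abs]) (aux_abs_mul_le hA (aux_abs_mul_le hB (aux_abs_mul_le hC hD)))
  have t2 : ‖((qt : ℂ) * ((A - A') * (B * (C * D))))‖ ≤ 1 * (2 * ε * (1 * (1 * 1))) :=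
    aux_abs_mul_le (by rwa [Complex.norm_real, Real.norm_eq_abs]) (aux_abs_mul_le hAd (aux_abs_mul_le hB (aux_abs_mul_le hC hD)))
  have t3 : ‖((qt : ℂ) * (A' * ((B - B') * (C * D))))‖ ≤ 1 * (2 * (2 * ε * (1 * 1))) :=
    aux_abs_mul_le (by rwa [Complex.norm_real, Real.norm_eq_abs]) (aux_abs_mul_le hA' (aux_abs_mul_le hBd (aux_abs_mul_le hC hD)))
  have t4 : ‖((qt : ℂ) * (A' * (B' * ((C - C') * D))))‖ ≤ 1 * (2 * (2 * (2 * ε * 1))) :=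
    aux_abs_mul_le (by rwa [Complex.norm_real, Real.norm_eq_abs]) (aux_abs_mul_le hA' (aux_abs_mul_le hB' (aux_abs_mul_le hCd hD)))
  have t5 : ‖((qt : ℂ) * (A' * (B' * (C' * (D - D')))))‖ ≤ 1 * (2 * (2 * (2 * (2 * ε)))) :=
    aux_abs_mul_le (by rwa [Complex.norm_real, Real.norm_eq_abs]) (aux_abs_mul_le hA' (aux_abs_mul_le hB' (aux_abs_mul_le hC' hDd)))
  calc ‖(_ + _ + _ + _ + _)‖ ≤ _ :=
        le_trans (norm_add_le _ _) (add_le_add (le_trans (norm_add_le _ _)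
          (add_le_add (le_trans (norm_add_le _ _) (add_le_add (le_trans
            (norm_add_le _ _) (add_le_add t1 t2)) t3)) t4)) t5)
    _ ≤ 31 * ε := by linarith

theorem frobNorm_truncation_bound
    (M N : ℕ) (hM : 1 ≤ M) (hN : 1 ≤ N) (p : ℕ) (hp : 1 ≤ p)
    (q : Fin (M ^ 2 * N ^ 2) → ℝ) (hq : ∀ i, 0 ≤ q i ∧ q i ≤ 1) (hqs : ∑ i, q i = 1)
    (α : Fin (M ^ 2 * N ^ 2) → Fin M → ℂ) (β : Fin (M ^ 2 * N ^ 2) → Fin N → ℂ)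
    (hα : ∀ i, unitVec (α i)) (hβ : ∀ i, unitVec (β i))
    (qt : Fin (M ^ 2 * N ^ 2) → ℝ) (hqt : ∀ i, 0 ≤ qt i ∧ qt i ≤ 1)
    (αt : Fin (M ^ 2 * N ^ 2) → Fin M → ℂ) (βt : Fin (M ^ 2 * N ^ 2) → Fin N → ℂ)
    (hqc : ∀ i, |q i - qt i| ≤ (2 : ℝ) ^ (-(p : ℝ)))
    (hαc : ∀ i j, |(αt i j).re - (α i j).re| ≤ (2 : ℝ) ^ (-(p : ℝ)) ∧
                  |(αt i j).im - (α i j).im| ≤ (2 : ℝ) ^ (-(p : ℝ)) ∧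
                  |(αt i j).re| ≤ 1 ∧ |(αt i j).im| ≤ 1)
    (hβc : ∀ i l, |(βt i l).re - (β i l).re| ≤ (2 : ℝ) ^ (-(p : ℝ)) ∧
                  |(βt i l).im - (β i l).im| ≤ (2 : ℝ) ^ (-(p : ℝ)) ∧
                  |(βt i l).re| ≤ 1 ∧ |(βt i l).im| ≤ 1) :
    frobNorm ((∑ i, q i • prodState (α i) (β i)) - ∑ i, qt i • prodState (αt i) (βt i))
      < (M : ℝ) ^ 3 * (N : ℝ) ^ 3 * (2 : ℝ) ^ (-((p : ℝ) - 7.5)) := by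
  set ε : ℝ := (2 : ℝ) ^ (-(p : ℝ)) with hεdef
  have hε : 0 < ε := Real.rpow_pos_of_pos two_pos _
  set X := (∑ i, q i • prodState (α i) (β i)) - ∑ i, qt i • prodState (αt i) (βt i) with hX
  -- bounds on vector entries
  have habs_α : ∀ i j, ‖(α i j)‖ ≤ 1 := by
    intro i j
    have h1 : Complex.normSq (α i j) ≤ 1 := by
      rw [← hα i]
      exact Finset.single_le_sum (f := fun j => Complex.normSq (α i j))
        (fun _ _ => Complex.normSq_nonneg _) (Finset.mem_univ j)
    have := Real.sqrt_le_sqrt h1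
    simpa [Complex.norm_def] using this
  have habs_β : ∀ i l, ‖(β i l)‖ ≤ 1 := by
    intro i l
    have h1 : Complex.normSq (β i l) ≤ 1 := by
      rw [← hβ i]
      exact Finset.single_le_sum (f := fun l => Complex.normSq (β i l))
        (fun _ _ => Complex.normSq_nonneg _) (Finset.mem_univ l)
    have := Real.sqrt_le_sqrt h1
    simpa [Complex.norm_def] using this
  have habs_αt : ∀ i j, ‖(αt i j)‖ ≤ 2 := by
    intro i j
    obtain ⟨_, _, h3, h4⟩ := hαc i j
    calc ‖(αt i j)‖ ≤ |(αt i j).re| + |(αt i j).im| :=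
          Complex.norm_le_abs_re_add_abs_im _
      _ ≤ 2 := by linarith
  have habs_βt : ∀ i l, ‖(βt i l)‖ ≤ 2 := by
    intro i l
    obtain ⟨_, _, h3, h4⟩ := hβc i l
    calc ‖(βt i l)‖ ≤ |(βt i l).re| + |(βt i l).im| :=
          Complex.norm_le_abs_re_add_abs_im _
      _ ≤ 2 := by linarith
  have hdiff_α : ∀ i j, ‖(α i j - αt i j)‖ ≤ 2 * ε := by
    intro i j
    obtain ⟨h1, h2, _, _⟩ := hαc i j
    calc ‖(α i j - αt i j)‖
        ≤ |(α i j - αt i j).re| + |(α i j - αt i j).im| := Complex.norm_le_abs_re_add_abs_im _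
      _ ≤ 2 * ε := by
          simp only [Complex.sub_re, Complex.sub_im]
          rw [abs_sub_comm ((α i j).re), abs_sub_comm ((α i j).im)] at *
          linarith
  have hdiff_β : ∀ i l, ‖(β i l - βt i l)‖ ≤ 2 * ε := by
    intro i l
    obtain ⟨h1, h2, _, _⟩ := hβc i l
    calc ‖(β i l - βt i l)‖
        ≤ |(β i l - βt i l).re| + |(β i l - βt i l).im| := Complex.norm_le_abs_re_add_abs_im _
      _ ≤ 2 * ε := by
          simp only [Complex.sub_re, Complex.sub_im]
          rw [abs_sub_comm ((β i l).re), abs_sub_comm ((β i l).im)] at *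
          linarith
  -- entrywise bound on X
  have hK : ∀ r c, ‖(X r c)‖ ≤ (M ^ 2 * N ^ 2 : ℝ) * (31 * ε) := by
    intro r c
    obtain ⟨j, l⟩ := r
    obtain ⟨k, m⟩ := c
    have hXentry : X (j, l) (k, m) = ∑ i,
        ((q i : ℂ) * (α i j * (starRingEnd ℂ) (α i k) * (β i l * (starRingEnd ℂ) (β i m)))
          - (qt i : ℂ) * (αt i j * (starRingEnd ℂ) (αt i k) * (βt i l * (starRingEnd ℂ) (βt i m)))) := by
      simp [hX, Matrix.sub_apply, Matrix.sum_apply, prodState, outer, Matrix.kroneckerMap_apply,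
        Matrix.vecMulVec_apply, Complex.real_smul, Finset.sum_sub_distrib]
    rw [hXentry]
    calc ‖(∑ i, _)‖ ≤ ∑ i : Fin (M ^ 2 * N ^ 2), (31 * ε) := by
          refine le_trans (norm_sum_le _ _) (Finset.sum_le_sum fun i _ => ?_)
          refine aux_telescope5 (q i) (qt i) _ _ _ _ _ _ _ _ ε ?_ (hqc i)
            (habs_α i j) ?_ (habs_β i l) ?_ (habs_αt i j) ?_ (habs_βt i l) ?_ ?_ ?_ ?_
          · rw [abs_le]; exact ⟨by linarith [(hqt i).1], (hqt i).2⟩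
          · simpa using habs_α i k
          · simpa using habs_β i m
          · simpa using habs_αt i k
          · exact hdiff_α i j
          · rw [← map_sub, Complex.norm_conj]; exact hdiff_α i k
          · exact hdiff_β i l
          · rw [← map_sub, Complex.norm_conj]; exact hdiff_β i m
      _ = (M ^ 2 * N ^ 2 : ℝ) * (31 * ε) := by
          rw [Finset.sum_const, Finset.card_univ, Fintype.card_fin, nsmul_eq_mul]
          push_cast; ring
  -- Frobenius norm bound
  set K : ℝ := (M ^ 2 * N ^ 2 : ℝ) * (31 * ε) with hKdef
  have hK0 : 0 ≤ K := by positivity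
  have hfrob : frobNorm X ≤ (M * N : ℝ) * K := by
    rw [frobNorm, aux_frob_eq]
    have hsum : ∑ c, ∑ r, Complex.normSq (X r c) ≤ ((M * N : ℝ) * K) ^ 2 := by
      have hcard : (Fintype.card (Fin M × Fin N) : ℝ) = (M * N : ℝ) := by simp
      calc ∑ c, ∑ r, Complex.normSq (X r c)
          ≤ ∑ _c : Fin M × Fin N, ∑ _r : Fin M × Fin N, K ^ 2 := by
            refine Finset.sum_le_sum fun c _ => Finset.sum_le_sum fun r _ => ?_
            rw [← Complex.sq_norm]
            exact pow_le_pow_left₀ (norm_nonneg _) (hK r c) 2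
        _ = (M * N : ℝ) * ((M * N : ℝ) * K ^ 2) := by
            simp [Finset.sum_const, Finset.card_univ, nsmul_eq_mul]
        _ = ((M * N : ℝ) * K) ^ 2 := by ring
    calc Real.sqrt (∑ c, ∑ r, Complex.normSq (X r c)) ≤ Real.sqrt (((M * N : ℝ) * K) ^ 2) :=
          Real.sqrt_le_sqrt hsum
      _ = (M * N : ℝ) * K := Real.sqrt_sq (by positivity)
  -- final numeric step
  have hexp : (2 : ℝ) ^ (-((p : ℝ) - 7.5)) = (2 : ℝ) ^ (7.5 : ℝ) * ε := by
    rw [hεdef, ← Real.rpow_add two_pos]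
    norm_num
    rw [sub_eq_add_neg]
  have h32 : (32 : ℝ) ≤ (2 : ℝ) ^ (7.5 : ℝ) := by
    have : (2 : ℝ) ^ (5 : ℝ) ≤ (2 : ℝ) ^ (7.5 : ℝ) :=
      Real.rpow_le_rpow_of_exponent_le one_le_two (by norm_num)
    calc (32 : ℝ) = (2 : ℝ) ^ (5 : ℝ) := by
          rw [show (5 : ℝ) = ((5 : ℕ) : ℝ) by norm_num, Real.rpow_natCast]; norm_num
      _ ≤ _ := this
  have hM1 : (1 : ℝ) ≤ (M : ℝ) := by exact_mod_cast hM
  have hN1 : (1 : ℝ) ≤ (N : ℝ) := by exact_mod_cast hN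
  have hfin : (M * N : ℝ) * K < (M : ℝ) ^ 3 * (N : ℝ) ^ 3 * ((2 : ℝ) ^ (7.5 : ℝ) * ε) := by
    rw [hKdef]
    have h1 : (M * N : ℝ) * ((M ^ 2 * N ^ 2 : ℝ) * (31 * ε)) = (M : ℝ) ^ 3 * (N : ℝ) ^ 3 * (31 * ε) := by
      push_cast; ring
    rw [h1]
    have hpos : 0 < (M : ℝ) ^ 3 * (N : ℝ) ^ 3 := by positivity
    have : 31 * ε < (2 : ℝ) ^ (7.5 : ℝ) * ε := by nlinarith
    exact mul_lt_mul_of_pos_left this hpos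
  calc frobNorm X ≤ (M * N : ℝ) * K := hfrob
    _ < (M : ℝ) ^ 3 * (N : ℝ) ^ 3 * ((2 : ℝ) ^ (7.5 : ℝ) * ε) := hfin
    _ = (M : ℝ) ^ 3 * (N : ℝ) ^ 3 * (2 : ℝ) ^ (-((p : ℝ) - 7.5)) := by rw [hexp]
end

section
/- Let M, N, k ≥ 1. For i = 1,…,k let p̃_i ≥ 0 with Σ_j p̃_j > 0, and let α̃_i ∈ ℂ^M and β̃_i ∈ ℂ^N be nonzero vectors. Define σ̃ = Σ_i p̃_i (α̃_i α̃_iᴴ) ⊗ (β̃_i β̃_iᴴ) and σ̂ = Σ_i p̂_i (α̂_i α̂_iᴴ) ⊗ (β̂_i β̂_iᴴ), where p̂_i = p̃_i / Σ_j p̃_j, α̂_i = α̃_i / ‖α̃_i‖, and β̂_i = β̃_i / ‖β̃_i‖. Then ‖σ̂ − σ̃‖₂ ≤ Σ_i p̂_i · |1 − ‖α̃_i‖² · ‖β̃_i‖² · Σ_j p̃_j|. -/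
open scoped Matrix Kronecker BigOperators

attribute [local instance] Matrix.frobeniusNormedAddCommGroup Matrix.frobeniusNormedSpace

lemma frobNorm_eq {n : Type*} [Fintype n] (X : Matrix n n ℂ) : frobNorm X = ‖X‖ := by
  have h : (Matrix.trace (Xᴴ * X)).re = ∑ i, ∑ j, ‖X i j‖ ^ 2 := by
    rw [Matrix.trace]
    simp only [Matrix.diag, Matrix.mul_apply, Matrix.conjTranspose_apply, Complex.re_sum]
    rw [Finset.sum_comm]
    refine Finset.sum_congr rfl fun i _ => Finset.sum_congr rfl fun j _ => ?_
    rw [RCLike.star_def, mul_comm, Complex.mul_conj]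
    simp [Complex.normSq_eq_norm_sq, ← Complex.ofReal_pow]
  rw [frobNorm, h, Matrix.frobenius_norm_def, Real.sqrt_eq_rpow]
  simp only [Real.rpow_two]

lemma prodState_apply {M N : ℕ} (a : Fin M → ℂ) (b : Fin N → ℂ) (i j l m) :
    prodState a b (i, l) (j, m) = (a i * (starRingEnd ℂ) (a j)) * (b l * (starRingEnd ℂ) (b m)) := by
  simp [prodState, outer, Matrix.kroneckerMap_apply, Matrix.vecMulVec_apply]

lemma prodState_div {M N : ℕ} (a : Fin M → ℂ) (b : Fin N → ℂ) (c d : ℝ) :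
    prodState (fun j => a j / (c : ℂ)) (fun l => b l / (d : ℂ))
      = ((c ^ 2)⁻¹ * (d ^ 2)⁻¹) • prodState a b := by
  ext ⟨i, l⟩ ⟨j, m⟩
  simp only [prodState_apply, Matrix.smul_apply, Complex.real_smul]
  rw [map_div₀, map_div₀, Complex.conj_ofReal, Complex.conj_ofReal]
  push_cast
  ring

lemma frobNorm_prodState {M N : ℕ} (a : Fin M → ℂ) (b : Fin N → ℂ) :
    ‖prodState a b‖ = (∑ j, Complex.normSq (a j)) * (∑ l, Complex.normSq (b l)) := by
  rw [Matrix.frobenius_norm_def]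
  simp only [Real.rpow_two]
  have key : ∀ p q : Fin M × Fin N, ‖prodState a b p q‖ ^ 2
      = (Complex.normSq (a p.1) * Complex.normSq (b p.2)) *
        (Complex.normSq (a q.1) * Complex.normSq (b q.2)) := by
    rintro ⟨i, l⟩ ⟨j, m⟩
    simp only [prodState_apply, norm_mul, mul_pow, map_mul,
      Complex.norm_conj, ← Complex.normSq_eq_norm_sq]
    ring
  have h : ∑ p : Fin M × Fin N, ∑ q : Fin M × Fin N, ‖prodState a b p q‖ ^ 2
      = ((∑ j, Complex.normSq (a j)) * (∑ l, Complex.normSq (b l))) ^ 2 := by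
    simp only [key]
    rw [← Finset.sum_mul_sum, ← sq]
    have : ∑ p : Fin M × Fin N, Complex.normSq (a p.1) * Complex.normSq (b p.2)
        = (∑ j, Complex.normSq (a j)) * (∑ l, Complex.normSq (b l)) := by
      rw [Fintype.sum_prod_type]
      simp only
      rw [← Finset.sum_mul_sum]
    rw [this]
  rw [h, ← Real.sqrt_eq_rpow, Real.sqrt_sq]
  exact mul_nonneg (Finset.sum_nonneg fun _ _ => Complex.normSq_nonneg _)
    (Finset.sum_nonneg fun _ _ => Complex.normSq_nonneg _)

theorem normalization_error_bound
    (M N k : ℕ) (hM : 1 ≤ M) (hN : 1 ≤ N) (hk : 1 ≤ k)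
    (qt : Fin k → ℝ) (hqt : ∀ i, 0 ≤ qt i) (hsum : 0 < ∑ j, qt j)
    (αt : Fin k → Fin M → ℂ) (βt : Fin k → Fin N → ℂ)
    (hαne : ∀ i, αt i ≠ 0) (hβne : ∀ i, βt i ≠ 0) :
    frobNorm ((∑ i, (qt i / ∑ j, qt j) • prodState
        (fun j => αt i j / (Real.sqrt (∑ j', Complex.normSq (αt i j')) : ℂ))
        (fun l => βt i l / (Real.sqrt (∑ l', Complex.normSq (βt i l')) : ℂ)))
      - ∑ i, qt i • prodState (αt i) (βt i))
    ≤ ∑ i, (qt i / ∑ j, qt j) *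
        |1 - (∑ j', Complex.normSq (αt i j')) * (∑ l', Complex.normSq (βt i l')) * ∑ j, qt j| := by
  set S := ∑ j, qt j with hS
  have hApos : ∀ i, 0 < ∑ j', Complex.normSq (αt i j') := by
    intro i
    obtain ⟨j, hj⟩ := Function.ne_iff.mp (hαne i)
    exact Finset.sum_pos' (fun _ _ => Complex.normSq_nonneg _)
      ⟨j, Finset.mem_univ _, Complex.normSq_pos.mpr hj⟩
  have hBpos : ∀ i, 0 < ∑ l', Complex.normSq (βt i l') := by
    intro i
    obtain ⟨l, hl⟩ := Function.ne_iff.mp (hβne i)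
    exact Finset.sum_pos' (fun _ _ => Complex.normSq_nonneg _)
      ⟨l, Finset.mem_univ _, Complex.normSq_pos.mpr hl⟩
  have hps : ∀ i, prodState
        (fun j => αt i j / (Real.sqrt (∑ j', Complex.normSq (αt i j')) : ℂ))
        (fun l => βt i l / (Real.sqrt (∑ l', Complex.normSq (βt i l')) : ℂ))
      = ((∑ j', Complex.normSq (αt i j'))⁻¹ * (∑ l', Complex.normSq (βt i l'))⁻¹) •
          prodState (αt i) (βt i) := by
    intro i
    rw [prodState_div, Real.sq_sqrt (hApos i).le, Real.sq_sqrt (hBpos i).le]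
  have hsub : (∑ i, (qt i / S) • prodState
        (fun j => αt i j / (Real.sqrt (∑ j', Complex.normSq (αt i j')) : ℂ))
        (fun l => βt i l / (Real.sqrt (∑ l', Complex.normSq (βt i l')) : ℂ)))
      - ∑ i, qt i • prodState (αt i) (βt i)
      = ∑ i, ((qt i / S) * ((∑ j', Complex.normSq (αt i j'))⁻¹ *
          (∑ l', Complex.normSq (βt i l'))⁻¹) - qt i) • prodState (αt i) (βt i) := by
    rw [← Finset.sum_sub_distrib]
    refine Finset.sum_congr rfl fun i _ => ?_
    rw [hps i, smul_smul, sub_smul]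
  rw [frobNorm_eq, hsub]
  refine le_trans (norm_sum_le _ _) (Finset.sum_le_sum fun i _ => ?_)
  rw [norm_smul, Real.norm_eq_abs, frobNorm_prodState]
  have hAi := hApos i
  have hBi := hBpos i
  have hc : (qt i / S) * ((∑ j', Complex.normSq (αt i j'))⁻¹ *
        (∑ l', Complex.normSq (βt i l'))⁻¹) - qt i
      = (qt i / (S * ((∑ j', Complex.normSq (αt i j')) * (∑ l', Complex.normSq (βt i l'))))) *
        (1 - (∑ j', Complex.normSq (αt i j')) * (∑ l', Complex.normSq (βt i l')) * S) := by
    field_simp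
  refine le_of_eq ?_
  rw [hc, abs_mul, abs_of_nonneg (div_nonneg (hqt i) (by positivity))]
  field_simp
end

section
/- Let V be a real normed vector space, let K ⊆ V be convex, and suppose K contains the closed ball of radius r > 0 centred at a point c. Let p ∈ V with p ∉ K and let δ > 0. Set p₀ = p + (δ/2)·(p − c). Then the closed ball of radius δ·r/2 centred at p₀ is disjoint from K. -/
theorem shifted_ball_disjoint_of_not_mem_convex
    {V : Type*} [NormedAddCommGroup V] [NormedSpace ℝ V]
    (K : Set V) (hK : Convex ℝ K) (c : V) (r : ℝ) (hr : 0 < r)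
    (hball : Metric.closedBall c r ⊆ K) (p : V) (hp : p ∉ K) (δ : ℝ) (hδ : 0 < δ) :
    Disjoint (Metric.closedBall (p + (δ / 2) • (p - c)) (δ * r / 2)) K := by
  rw [Set.disjoint_left]
  intro q hq hqK
  set t : ℝ := δ / 2 with ht
  have ht0 : 0 < t := by positivity
  have ht1 : 0 < 1 + t := by linarith
  set p₀ : V := p + t • (p - c) with hp₀
  set z : V := c + (t⁻¹) • (p₀ - q) with hz
  have hzK : z ∈ K := by
    apply hball
    rw [Metric.mem_closedBall]
    have : dist z c = t⁻¹ * ‖p₀ - q‖ := by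
      rw [hz, dist_eq_norm]
      simp only [add_sub_cancel_left, norm_smul, Real.norm_eq_abs,
        abs_of_pos (inv_pos.mpr ht0)]
    rw [this]
    have hqd : ‖p₀ - q‖ ≤ t * r := by
      have := Metric.mem_closedBall.mp hq
      rw [dist_eq_norm] at this
      rw [norm_sub_rev]
      calc ‖q - p₀‖ ≤ δ * r / 2 := this
        _ = t * r := by rw [ht]; ring
    calc t⁻¹ * ‖p₀ - q‖ ≤ t⁻¹ * (t * r) := by
          apply mul_le_mul_of_nonneg_left hqd (by positivity)
      _ = r := by field_simp
  have hcomb : (1 / (1 + t)) • q + (t / (1 + t)) • z = p := by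
    rw [hz, hp₀]
    have h1 : (1 + t) ≠ 0 := ne_of_gt ht1
    have h2 : t ≠ 0 := ne_of_gt ht0
    match_scalars <;> field_simp <;> ring
  have hpK : p ∈ K := by
    rw [← hcomb]
    exact hK hqK hzK (by positivity) (by positivity) (by field_simp)
  exact hp hpK
end

section
/- (Motzkin–Straus) Let G be a simple graph on vertex set Fin n with n ≥ 1, let A_G be its real n×n adjacency matrix ((A_G)_{ij} = 1 if {i,j} is an edge of G and 0 otherwise), and let κ be the clique number of G (the size of a largest clique; κ ≥ 1 since single vertices are cliques). Then the maximum of yᵀ A_G y over the standard simplex Δ_n = {y ∈ ℝⁿ : y_i ≥ 0 for all i, Σ_i y_i = 1} exists and equals 1 − 1/κ. -/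
open scoped BigOperators

private def MSB {n : ℕ} (A : Matrix (Fin n) (Fin n) ℝ) (u v : Fin n → ℝ) : ℝ :=
  ∑ i, ∑ j, A i j * u i * v j

private lemma MSB_expand {n : ℕ} (A : Matrix (Fin n) (Fin n) ℝ) (u v : Fin n → ℝ) (a : ℝ) :
    MSB A (fun k => u k + a * v k) (fun k => u k + a * v k)
      = MSB A u u + a * (MSB A u v + MSB A v u) + a ^ 2 * MSB A v v := by
  simp only [MSB, mul_add, Finset.mul_sum, ← Finset.sum_add_distrib]
  exact Finset.sum_congr rfl fun i _ => Finset.sum_congr rfl fun j _ => by ring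

private lemma MS_upper {n : ℕ} (G : SimpleGraph (Fin n)) [DecidableRel G.Adj] (κ : ℕ)
    (hκ1 : 1 ≤ κ) (hκ2 : ∀ s : Finset (Fin n), G.IsClique ↑s → s.card ≤ κ) :
    ∀ m : ℕ, ∀ y : Fin n → ℝ, y ∈ stdSimplex ℝ (Fin n) →
      (Finset.univ.filter fun i => y i ≠ 0).card ≤ m →
      MSB (G.adjMatrix ℝ) y y ≤ 1 - 1 / κ := by
  intro m
  induction m with
  | zero =>
      intro y hy hcard
      exfalso
      have hall : ∀ i, y i = 0 := by
        intro i
        by_contra h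
        have : i ∈ Finset.univ.filter fun i => y i ≠ 0 := by simp [h]
        have := Finset.card_pos.mpr ⟨i, this⟩
        omega
      have := hy.2
      simp [hall] at this
  | succ m ih =>
      intro y hy hcard
      set P : Finset (Fin n) := Finset.univ.filter fun i => y i ≠ 0 with hP
      by_cases hcl : ∀ i ∈ P, ∀ j ∈ P, i ≠ j → G.Adj i j
      · -- support is a clique
        have hPcard : P.card ≤ κ := by
          apply hκ2
          intro i hi j hj hne
          exact hcl i (by simpa using hi) j (by simpa using hj) hne
        have hsum : ∑ i ∈ P, y i = 1 := by
          rw [Finset.sum_subset (Finset.subset_univ P)]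
          · exact hy.2
          · intro x _ hx
            by_contra h
            exact hx (by simp [hP, h])
        -- restrict the quadratic form to P
        have hrestrict : MSB (G.adjMatrix ℝ) y y = ∑ i ∈ P, ∑ j ∈ P, (G.adjMatrix ℝ) i j * y i * y j := by
          rw [MSB]
          rw [← Finset.sum_subset (Finset.subset_univ P) (fun x _ hx => ?_)]
          · refine Finset.sum_congr rfl fun i _ => ?_
            rw [← Finset.sum_subset (Finset.subset_univ P) (fun x _ hx => ?_)]
            have : y x = 0 := by by_contra h; exact hx (by simp [hP, h])
            simp [this]
          · have : y x = 0 := by by_contra h; exact hx (by simp [hP, h])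
            simp [this]
        have hval : MSB (G.adjMatrix ℝ) y y = 1 - ∑ i ∈ P, y i ^ 2 := by
          rw [hrestrict]
          have : ∀ i ∈ P, ∑ j ∈ P, (G.adjMatrix ℝ) i j * y i * y j = y i - y i ^ 2 := by
            intro i hi
            have h1 : ∀ j ∈ P, (G.adjMatrix ℝ) i j * y i * y j
                = y i * y j - (if j = i then y i * y j else 0) := by
              intro j hj
              by_cases hji : j = i
              · subst hji; simp [SimpleGraph.adjMatrix_apply]
              · have : G.Adj i j := hcl i hi j hj (Ne.symm hji)
                simp [SimpleGraph.adjMatrix_apply, this, hji]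
            rw [Finset.sum_congr rfl h1, Finset.sum_sub_distrib, Finset.sum_ite_eq' P i]
            rw [← Finset.mul_sum, hsum, if_pos hi]
            ring
          rw [Finset.sum_congr rfl this, Finset.sum_sub_distrib, hsum]
        rw [hval]
        have hcs : (1:ℝ) ≤ P.card * ∑ i ∈ P, y i ^ 2 := by
          have := sq_sum_le_card_mul_sum_sq (s := P) (f := y)
          rw [hsum] at this; simpa using this
        have hPpos : 0 < P.card := by
          by_contra h
          push_neg at h
          interval_cases h' : P.card <;> simp_all
        have h2 : (1:ℝ) / κ ≤ ∑ i ∈ P, y i ^ 2 := by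
          have hk0 : (0:ℝ) < κ := by exact_mod_cast hκ1
          have hc0 : (0:ℝ) < P.card := by exact_mod_cast hPpos
          have hck : (P.card : ℝ) ≤ κ := by exact_mod_cast hPcard
          calc (1:ℝ) / κ ≤ 1 / P.card := by
                apply one_div_le_one_div_of_le hc0 hck
            _ ≤ ∑ i ∈ P, y i ^ 2 := by
                rw [div_le_iff₀ hc0]
                linarith [hcs]
        linarith
      · -- two nonadjacent vertices in the support
        push_neg at hcl
        obtain ⟨i, hi, j, hj, hij, hadj⟩ := hcl
        have hyi : y i ≠ 0 := by simpa [hP] using hi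
        have hyj : y j ≠ 0 := by simpa [hP] using hj
        have hyi0 : 0 < y i := lt_of_le_of_ne (hy.1 i) (Ne.symm hyi)
        have hyj0 : 0 < y j := lt_of_le_of_ne (hy.1 j) (Ne.symm hyj)
        set d : Fin n → ℝ := fun k => (if k = i then (1:ℝ) else 0) - (if k = j then 1 else 0) with hd
        set s : ℝ := y i + y j with hs
        set y₂ : Fin n → ℝ := Function.update (Function.update y i 0) j s with hy₂
        set y₁ : Fin n → ℝ := Function.update (Function.update y j 0) i s with hy₁
        have hji : j ≠ i := Ne.symm hij
        have hy2i : y₂ i = 0 := by simp [hy₂, Function.update_apply, hij]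
        have hy2j : y₂ j = s := by simp [hy₂, Function.update_apply]
        have hy2k : ∀ k, k ≠ i → k ≠ j → y₂ k = y k := by
          intro k h1 h2; simp [hy₂, Function.update_apply, h1, h2]
        have hy1i : y₁ i = s := by simp [hy₁, Function.update_apply]
        have hy1j : y₁ j = 0 := by simp [hy₁, Function.update_apply, hji]
        have hy1k : ∀ k, k ≠ i → k ≠ j → y₁ k = y k := by
          intro k h1 h2; simp [hy₁, Function.update_apply, h1, h2]
        have hyeq : y = fun k => y₂ k + y i * d k := by
          funext k
          by_cases h1 : k = i
          · subst h1; simp [hy2i, hd, hij]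
          · by_cases h2 : k = j
            · subst h2; simp [hy2j, hd, hji, hs]
            · simp [hy2k k h1 h2, hd, h1, h2]
        have hy1eq : y₁ = fun k => y₂ k + s * d k := by
          funext k
          by_cases h1 : k = i
          · subst h1; simp [hy1i, hy2i, hd, hij]
          · by_cases h2 : k = j
            · subst h2; simp [hy1j, hy2j, hd, hji]
            · simp [hy1k k h1 h2, hy2k k h1 h2, hd, h1, h2]
        -- MSB A d d = 0
        have hAij : (G.adjMatrix ℝ) i j = 0 := by simp [SimpleGraph.adjMatrix_apply, hadj]
        have hAji : (G.adjMatrix ℝ) j i = 0 := by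
          simp [SimpleGraph.adjMatrix_apply]
          intro h; exact hadj h.symm
        have hdd : MSB (G.adjMatrix ℝ) d d = 0 := by
          have hinner : ∀ k, ∑ l, (G.adjMatrix ℝ) k l * d k * d l
              = d k * ((G.adjMatrix ℝ) k i - (G.adjMatrix ℝ) k j) := by
            intro k
            have : ∀ l, (G.adjMatrix ℝ) k l * d k * d l
                = (if l = i then d k * (G.adjMatrix ℝ) k l else 0)
                  - (if l = j then d k * (G.adjMatrix ℝ) k l else 0) := by
              intro l
              by_cases h1 : l = i
              · subst h1; simp [hd, hij, Ne.symm hij]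
              · by_cases h2 : l = j
                · subst h2; simp [hd, h1, hji]
                · simp [hd, h1, h2]
            rw [Finset.sum_congr rfl fun l _ => this l, Finset.sum_sub_distrib,
              Finset.sum_ite_eq' Finset.univ i, Finset.sum_ite_eq' Finset.univ j]
            simp only [Finset.mem_univ, if_true]
            ring
          rw [MSB, Finset.sum_congr rfl fun k _ => hinner k]
          have : ∀ k, d k * ((G.adjMatrix ℝ) k i - (G.adjMatrix ℝ) k j)
              = (if k = i then ((G.adjMatrix ℝ) k i - (G.adjMatrix ℝ) k j) else 0)
                - (if k = j then ((G.adjMatrix ℝ) k i - (G.adjMatrix ℝ) k j) else 0) := by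
            intro k
            by_cases h1 : k = i
            · subst h1; simp [hd, hij]
            · by_cases h2 : k = j
              · subst h2; simp [hd, h1]; split <;> norm_num
              · simp [hd, h1, h2]
          rw [Finset.sum_congr rfl fun k _ => this k, Finset.sum_sub_distrib,
            Finset.sum_ite_eq' Finset.univ i, Finset.sum_ite_eq' Finset.univ j]
          simp only [Finset.mem_univ, if_true]
          rw [hAij, hAji]
          simp [SimpleGraph.adjMatrix_apply]
        set c : ℝ := MSB (G.adjMatrix ℝ) y₂ d + MSB (G.adjMatrix ℝ) d y₂ with hc
        clear_value c
        clear_value d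
        clear_value y₂
        clear_value y₁
        have hQy : MSB (G.adjMatrix ℝ) y y = MSB (G.adjMatrix ℝ) y₂ y₂ + y i * c := by
          conv_lhs => rw [hyeq]
          rw [MSB_expand (G.adjMatrix ℝ) y₂ d (y i), hdd, hc]; ring
        have hQy1 : MSB (G.adjMatrix ℝ) y₁ y₁ = MSB (G.adjMatrix ℝ) y₂ y₂ + s * c := by
          rw [hy1eq, MSB_expand (G.adjMatrix ℝ) y₂ d s, hdd, hc]; ring
        -- sums are preserved
        have hjmem : j ∈ (Finset.univ : Finset (Fin n)) := Finset.mem_univ j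
        have himem : i ∈ (Finset.univ : Finset (Fin n)) := Finset.mem_univ i
        have hsumy : ∑ k, y k = 1 := hy.2
        have e1 : ∑ x : Fin n, y x = y i + ∑ x ∈ Finset.univ \ {i}, y x :=
          Finset.sum_eq_add_sum_sdiff_singleton_of_mem himem y
        have e2 : ∑ x ∈ Finset.univ \ {i}, y x
            = y j + ∑ x ∈ (Finset.univ \ {i}) \ {j}, y x :=
          Finset.sum_eq_add_sum_sdiff_singleton_of_mem (by simp [hji]) y
        have hrest : ∑ x ∈ (Finset.univ \ {i}) \ {j}, y x = 1 - y i - y j := by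
          rw [e1, e2] at hsumy; linarith
        have hsum2 : ∑ k, y₂ k = 1 := by
          rw [hy₂, Finset.sum_update_of_mem hjmem,
            Finset.sum_update_of_mem (by simp [hij] : i ∈ Finset.univ \ {j})]
          have hswap : (Finset.univ \ {j}) \ {i} = (Finset.univ \ {i}) \ {j} := by
            ext x; simp; tauto
          rw [hswap, hrest, hs]; ring
        have hsum1 : ∑ k, y₁ k = 1 := by
          rw [hy₁, Finset.sum_update_of_mem himem,
            Finset.sum_update_of_mem (by simp [hji] : j ∈ Finset.univ \ {i})]
          rw [hrest, hs]; ring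
        have hy2simplex : y₂ ∈ stdSimplex ℝ (Fin n) := by
          refine ⟨fun k => ?_, hsum2⟩
          by_cases h1 : k = i
          · subst h1; rw [hy2i]
          · by_cases h2 : k = j
            · subst h2; rw [hy2j, hs]; positivity
            · rw [hy2k k h1 h2]; exact hy.1 k
        have hy1simplex : y₁ ∈ stdSimplex ℝ (Fin n) := by
          refine ⟨fun k => ?_, hsum1⟩
          by_cases h1 : k = i
          · subst h1; rw [hy1i, hs]; positivity
          · by_cases h2 : k = j
            · subst h2; rw [hy1j]
            · rw [hy1k k h1 h2]; exact hy.1 k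
        -- support cardinalities
        have hsupp2 : (Finset.univ.filter fun k => y₂ k ≠ 0) ⊆ P.erase i := by
          intro k hk
          simp only [Finset.mem_filter, Finset.mem_univ, true_and] at hk
          rw [Finset.mem_erase]
          constructor
          · intro h; subst h; exact hk hy2i
          · by_cases h2 : k = j
            · subst h2; exact hj
            · by_cases h1 : k = i
              · exact absurd (h1 ▸ hy2i) hk
              · rw [hy2k k h1 h2] at hk; simp [hP, hk]
        have hsupp1 : (Finset.univ.filter fun k => y₁ k ≠ 0) ⊆ P.erase j := by
          intro k hk
          simp only [Finset.mem_filter, Finset.mem_univ, true_and] at hk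
          rw [Finset.mem_erase]
          constructor
          · intro h; subst h; exact hk hy1j
          · by_cases h1 : k = i
            · subst h1; exact hi
            · by_cases h2 : k = j
              · exact absurd (h2 ▸ hy1j) hk
              · rw [hy1k k h1 h2] at hk; simp [hP, hk]
        have hcard2 : (Finset.univ.filter fun k => y₂ k ≠ 0).card ≤ m := by
          have h1 := Finset.card_le_card hsupp2
          have h2 := Finset.card_erase_of_mem hi
          omega
        have hcard1 : (Finset.univ.filter fun k => y₁ k ≠ 0).card ≤ m := by
          have h1 := Finset.card_le_card hsupp1
          have h2 := Finset.card_erase_of_mem hj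
          omega
        have ih2 := ih y₂ hy2simplex hcard2
        have ih1 := ih y₁ hy1simplex hcard1
        rcases le_or_gt 0 c with hc0 | hc0
        · have : y i * c ≤ s * c := by
            apply mul_le_mul_of_nonneg_right _ hc0
            rw [hs]; linarith
          linarith [hQy, hQy1, ih1]
        · have : y i * c ≤ 0 := mul_nonpos_of_nonneg_of_nonpos (le_of_lt hyi0) (le_of_lt hc0)
          linarith [hQy, ih2]

theorem motzkin_straus
    (n : ℕ) (hn : 1 ≤ n) (G : SimpleGraph (Fin n)) [DecidableRel G.Adj]
    (κ : ℕ) (hκ : IsGreatest {k : ℕ | ∃ s : Finset (Fin n), G.IsNClique k s} κ) :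
    IsGreatest {r : ℝ | ∃ y ∈ stdSimplex ℝ (Fin n),
        r = ∑ i, ∑ j, (G.adjMatrix ℝ) i j * y i * y j} (1 - 1 / (κ : ℝ)) := by
  have v : Fin n := ⟨0, hn⟩
  have hκ1 : 1 ≤ κ := by
    apply hκ.2
    exact ⟨{v}, by simp [SimpleGraph.isNClique_iff, SimpleGraph.isClique_iff, Set.Pairwise]⟩
  have hκ0 : (0:ℝ) < κ := by exact_mod_cast hκ1
  obtain ⟨s, hs⟩ := hκ.1
  constructor
  · -- attained
    set y : Fin n → ℝ := fun k => if k ∈ s then 1 / κ else 0 with hy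
    refine ⟨y, ⟨fun k => by rw [hy]; dsimp only; split <;> positivity, ?_⟩, ?_⟩
    · rw [hy]
      simp only
      rw [Finset.sum_ite_mem, Finset.univ_inter, Finset.sum_const, hs.2, nsmul_eq_mul]
      field_simp
    · have hrestrict : ∑ i, ∑ j, (G.adjMatrix ℝ) i j * y i * y j
          = ∑ i ∈ s, ∑ j ∈ s, (G.adjMatrix ℝ) i j * y i * y j := by
        rw [← Finset.sum_subset (Finset.subset_univ s) (fun x _ hx => ?_)]
        · refine Finset.sum_congr rfl fun i _ => ?_
          rw [← Finset.sum_subset (Finset.subset_univ s) (fun x _ hx => ?_)]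
          have : y x = 0 := by simp [hy, hx]
          simp [this]
        · have : y x = 0 := by simp [hy, hx]
          simp [this]
      rw [hrestrict]
      have hinner : ∀ i ∈ s, ∑ j ∈ s, (G.adjMatrix ℝ) i j * y i * y j
          = ((κ:ℝ) - 1) * (1/(κ:ℝ)) * (1/(κ:ℝ)) := by
        intro i hi
        have h1 : ∀ j ∈ s, (G.adjMatrix ℝ) i j * y i * y j
            = (1/(κ:ℝ)) * (1/(κ:ℝ)) - (if j = i then (1/(κ:ℝ)) * (1/(κ:ℝ)) else 0) := by
          intro j hj
          by_cases hji : j = i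
          · subst hji; simp [SimpleGraph.adjMatrix_apply, hy, hj]
          · have hadj : G.Adj i j := hs.1 hi hj (Ne.symm hji)
            simp [SimpleGraph.adjMatrix_apply, hadj, hji, hy, hi, hj]
        rw [Finset.sum_congr rfl h1, Finset.sum_sub_distrib, Finset.sum_ite_eq' s i,
          if_pos hi, Finset.sum_const, hs.2, nsmul_eq_mul]
        ring
      rw [Finset.sum_congr rfl hinner, Finset.sum_const, hs.2, nsmul_eq_mul]
      field_simp
  · -- upper bound
    rintro r ⟨y, hy, rfl⟩
    have hκ2 : ∀ t : Finset (Fin n), G.IsClique ↑t → t.card ≤ κ := by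
      intro t ht
      exact hκ.2 ⟨t, ht, rfl⟩
    exact MS_upper G κ hκ1 hκ2 n y hy (le_trans (Finset.card_le_card (Finset.subset_univ _)) (by simp))
end

section
/- Let G be a simple graph on vertex set Fin n with n ≥ 1, let A_G be its real n×n adjacency matrix, and let c ≥ 1 be an integer. Then G has a clique of size at least c if and only if there exists y in the standard simplex Δ_n with yᵀ A_G y ≥ 1 − 1/c. -/
open scoped BigOperators

open Finset

section MotzkinStraus

variable {n : ℕ} (G : SimpleGraph (Fin n)) [DecidableRel G.Adj]

/-- Shifting all mass from vertex `i` to a non-adjacent vertex `j` (with larger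
"marginal" value) does not decrease the quadratic form. -/
private lemma ms_step (y : Fin n → ℝ) (hy0 : ∀ k, 0 ≤ y k) (i j : Fin n)
    (hij : i ≠ j) (hadj : ¬ G.Adj i j)
    (hM : (∑ q, (G.adjMatrix ℝ) i q * y q) + (∑ p, (G.adjMatrix ℝ) p i * y p)
        ≤ (∑ q, (G.adjMatrix ℝ) j q * y q) + (∑ p, (G.adjMatrix ℝ) p j * y p)) :
    ∃ y' : Fin n → ℝ, (∀ k, 0 ≤ y' k) ∧ (∑ k, y' k = ∑ k, y k) ∧ y' i = 0 ∧
      (∀ k, y' k ≠ 0 → y k ≠ 0 ∨ k = j) ∧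
      ∑ p, ∑ q, (G.adjMatrix ℝ) p q * y p * y q
        ≤ ∑ p, ∑ q, (G.adjMatrix ℝ) p q * y' p * y' q := by
  set A := G.adjMatrix ℝ with hA
  set d : Fin n → ℝ := fun k => (if k = j then 1 else 0) - (if k = i then 1 else 0) with hd
  set t := y i with ht
  have hdsum : ∀ g : Fin n → ℝ, ∑ p, d p * g p = g j - g i := by
    intro g
    simp only [hd, sub_mul, ite_mul, one_mul, zero_mul, Finset.sum_sub_distrib,
      Fintype.sum_ite_eq']
  refine ⟨fun k => y k + t * d k, ?_, ?_, ?_, ?_, ?_⟩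
  · intro k
    by_cases hki : k = i
    · subst hki; simp [hd, hij, ht]
    · by_cases hkj : k = j
      · subst hkj
        have hdk : d k = 1 := by simp [hd, hki]
        show 0 ≤ y k + t * d k
        rw [hdk, mul_one]
        exact add_nonneg (hy0 k) (hy0 i)
      · simp [hd, hki, hkj, hy0 k]
  · have hsd : ∑ k, d k = 0 := by
      have := hdsum (fun _ => 1)
      simpa using this
    simp [Finset.sum_add_distrib, ← Finset.mul_sum, hsd]
  · simp [hd, hij, ht]
  · intro k hk
    by_cases hkj : k = j
    · exact Or.inr hkj
    · by_cases hki : k = i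
      · exfalso; apply hk; subst hki; simp [hd, hij, ht]
      · left; intro h; apply hk; simp [hd, hki, hkj, h]
  · have expand : ∀ p q, A p q * (y p + t * d p) * (y q + t * d q)
        = A p q * y p * y q + t * (A p q * y p * d q) + t * (A p q * d p * y q)
          + t * t * (A p q * d p * d q) := by intro p q; ring
    have hS1 : ∑ p, ∑ q, A p q * y p * d q
        = (∑ p, A p j * y p) - ∑ p, A p i * y p := by
      have comm1 : ∀ p, ∑ q, A p q * y p * d q = ∑ q, d q * (A p q * y p) :=
        fun p => Finset.sum_congr rfl fun q _ => by ring
      simp only [comm1, hdsum]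
      rw [Finset.sum_sub_distrib]
    have hS2 : ∑ p, ∑ q, A p q * d p * y q
        = (∑ q, A j q * y q) - ∑ q, A i q * y q := by
      have comm2 : ∀ p, ∑ q, A p q * d p * y q = d p * ∑ q, A p q * y q := by
        intro p
        rw [Finset.mul_sum]
        exact Finset.sum_congr rfl fun q _ => by ring
      rw [Finset.sum_congr rfl fun p _ => comm2 p, hdsum fun p => ∑ q, A p q * y q]
    have haij : A i j = 0 := by simp [hA, hadj]
    have hadj' : ¬ G.Adj j i := fun h => hadj h.symm
    have haji : A j i = 0 := by simp [hA, hadj']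
    have haii : A i i = 0 := by simp [hA]
    have hajj : A j j = 0 := by simp [hA]
    have hS3 : ∑ p, ∑ q, A p q * d p * d q = 0 := by
      have comm3 : ∀ p, ∑ q, A p q * d p * d q = d p * (A p j - A p i) := by
        intro p
        rw [show ∑ q, A p q * d p * d q = ∑ q, d q * (A p q * d p) from
          Finset.sum_congr rfl fun q _ => by ring, hdsum fun q => A p q * d p]
        ring
      rw [Finset.sum_congr rfl fun p _ => comm3 p, hdsum fun p => A p j - A p i]
      rw [haij, haji, haii, hajj]
      ring
    have key : ∑ p, ∑ q, A p q * (y p + t * d p) * (y q + t * d q)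
        = (∑ p, ∑ q, A p q * y p * y q)
          + t * ((∑ p, ∑ q, A p q * y p * d q) + (∑ p, ∑ q, A p q * d p * y q))
          + t * t * (∑ p, ∑ q, A p q * d p * d q) := by
      simp only [expand, Finset.sum_add_distrib, ← Finset.mul_sum]
      ring
    rw [key, hS1, hS2, hS3]
    have ht0 : 0 ≤ t := hy0 i
    nlinarith [mul_nonneg ht0 (sub_nonneg.2 hM)]

/-- Any point of the simplex gives a lower bound `1 - 1/|s|` witnessed by a clique `s`. -/
private lemma ms_aux : ∀ k : ℕ, ∀ y : Fin n → ℝ, (∀ i, 0 ≤ y i) → (∑ i, y i) = 1 →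
    (Finset.univ.filter fun i => y i ≠ 0).card ≤ k →
    ∃ s : Finset (Fin n), G.IsClique (s : Set (Fin n)) ∧ 1 ≤ s.card ∧
      ∑ i, ∑ j, (G.adjMatrix ℝ) i j * y i * y j ≤ 1 - 1 / (s.card : ℝ) := by
  intro k
  induction k with
  | zero =>
    intro y hy0 hy1 hcard
    exfalso
    have hz : ∀ i, y i = 0 := by
      intro i
      by_contra h
      have : i ∈ Finset.univ.filter fun i => y i ≠ 0 := by simp [h]
      have := Finset.card_pos.2 ⟨i, this⟩
      omega
    simp [hz] at hy1
  | succ k ih =>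
    intro y hy0 hy1 hcard
    set A := G.adjMatrix ℝ with hA
    set S := Finset.univ.filter fun i => y i ≠ 0 with hS
    have hSy : ∀ i ∉ S, y i = 0 := by
      intro i hi
      by_contra h
      exact hi (by simp [hS, h])
    have hSne : S.Nonempty := by
      rcases Finset.eq_empty_or_nonempty S with h | h
      · exfalso
        have hz : ∀ i, y i = 0 := fun i => hSy i (by simp [h])
        simp [hz] at hy1
      · exact h
    by_cases hcl : G.IsClique (S : Set (Fin n))
    · refine ⟨S, hcl, Finset.card_pos.2 hSne, ?_⟩
      have hb1 : ∑ i, ∑ j, A i j * y i * y j ≤ 1 - ∑ i, y i ^ 2 := by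
        have step1 : ∑ i, ∑ j, A i j * y i * y j
            ≤ ∑ i, ∑ j, (y i * y j - if i = j then y i * y j else 0) := by
          refine Finset.sum_le_sum fun i _ => Finset.sum_le_sum fun j _ => ?_
          by_cases h : i = j
          · subst h; simp [hA]
          · simp only [h, if_false, sub_zero]
            have : A i j ≤ 1 := by
              simp only [hA, SimpleGraph.adjMatrix_apply]
              split <;> norm_num
            calc A i j * y i * y j ≤ 1 * y i * y j := by
                  apply mul_le_mul_of_nonneg_right _ (hy0 j)
                  exact mul_le_mul_of_nonneg_right this (hy0 i)
              _ = y i * y j := by ring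
        have e1 : ∀ i, ∑ j, (y i * y j - if i = j then y i * y j else 0)
            = y i - y i ^ 2 := by
          intro i
          rw [Finset.sum_sub_distrib, ← Finset.mul_sum, hy1,
            Fintype.sum_ite_eq i fun j => y i * y j]
          ring
        calc ∑ i, ∑ j, A i j * y i * y j
            ≤ ∑ i, ∑ j, (y i * y j - if i = j then y i * y j else 0) := step1
          _ = 1 - ∑ i, y i ^ 2 := by
              rw [Finset.sum_congr rfl fun i _ => e1 i, Finset.sum_sub_distrib, hy1]
      have hcs : 1 ≤ (S.card : ℝ) * ∑ i, y i ^ 2 := by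
        have h1 : ∑ i ∈ S, y i = 1 := by
          rw [Finset.sum_subset (Finset.subset_univ S) (fun i _ hi => hSy i hi)]
          exact hy1
        have h2 := sq_sum_le_card_mul_sum_sq (s := S) (f := y)
        rw [h1] at h2
        have h3 : ∑ i ∈ S, y i ^ 2 ≤ ∑ i, y i ^ 2 :=
          Finset.sum_le_sum_of_subset_of_nonneg (Finset.subset_univ S)
            (fun i _ _ => sq_nonneg _)
        have h4 : (S.card : ℝ) * (∑ i ∈ S, y i ^ 2) ≤ (S.card : ℝ) * ∑ i, y i ^ 2 :=
          mul_le_mul_of_nonneg_left h3 (Nat.cast_nonneg _)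
        calc (1:ℝ) = 1 ^ 2 := by norm_num
          _ ≤ (S.card : ℝ) * (∑ i ∈ S, y i ^ 2) := by exact_mod_cast h2
          _ ≤ _ := h4
      have hcard0 : (0:ℝ) < S.card := by
        exact_mod_cast Finset.card_pos.2 hSne
      have : 1 / (S.card : ℝ) ≤ ∑ i, y i ^ 2 := by
        rw [div_le_iff₀ hcard0]
        linarith [hcs]
      linarith [hb1]
    · -- not a clique: find a non-adjacent pair in the support
      rw [SimpleGraph.isClique_iff, Set.Pairwise] at hcl
      push_neg at hcl
      obtain ⟨i, hi, j, hj, hij, hadj⟩ := hcl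
      have hiS : i ∈ S := hi
      have hjS : j ∈ S := hj
      have hyi : y i ≠ 0 := (Finset.mem_filter.1 hiS).2
      have hyj : y j ≠ 0 := (Finset.mem_filter.1 hjS).2
      set M : Fin n → ℝ := fun x => (∑ q, A x q * y q) + (∑ p, A p x * y p) with hM
      have main : ∀ a b : Fin n, a ≠ b → ¬ G.Adj a b → y a ≠ 0 → y b ≠ 0 →
          M a ≤ M b →
          ∃ s : Finset (Fin n), G.IsClique (s : Set (Fin n)) ∧ 1 ≤ s.card ∧
            ∑ p, ∑ q, A p q * y p * y q ≤ 1 - 1 / (s.card : ℝ) := by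
        intro a b hab hnadj hya hyb hMab
        obtain ⟨y', hy'0, hy'sum, hy'a, hy'supp, hy'le⟩ :=
          ms_step G y hy0 a b hab hnadj hMab
        have hsub : (Finset.univ.filter fun i => y' i ≠ 0) ⊆ S.erase a := by
          intro x hx
          have hx' : y' x ≠ 0 := (Finset.mem_filter.1 hx).2
          have hxa : x ≠ a := fun h => hx' (h ▸ hy'a)
          refine Finset.mem_erase.2 ⟨hxa, ?_⟩
          rcases hy'supp x hx' with h | h
          · simp [hS, h]
          · subst h; simp [hS, hyb]
        have hcard' : (Finset.univ.filter fun i => y' i ≠ 0).card ≤ k := by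
          have h1 := Finset.card_le_card hsub
          have h2 : (S.erase a).card = S.card - 1 :=
            Finset.card_erase_of_mem (by simp [hS, hya])
          omega
        obtain ⟨s, hs1, hs2, hs3⟩ := ih y' hy'0 (by rw [hy'sum]; exact hy1) hcard'
        exact ⟨s, hs1, hs2, le_trans hy'le hs3⟩
      rcases le_total (M i) (M j) with h | h
      · exact main i j hij hadj hyi hyj h
      · exact main j i hij.symm (fun hh => hadj hh.symm) hyj hyi h

end MotzkinStraus

theorem clique_iff_simplex_quadratic_form
    (n : ℕ) (hn : 1 ≤ n) (G : SimpleGraph (Fin n)) [DecidableRel G.Adj]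
    (c : ℕ) (hc : 1 ≤ c) :
    (∃ s : Finset (Fin n), c ≤ s.card ∧ G.IsClique (s : Set (Fin n))) ↔
      ∃ y ∈ stdSimplex ℝ (Fin n),
        1 - 1 / (c : ℝ) ≤ ∑ i, ∑ j, (G.adjMatrix ℝ) i j * y i * y j := by
  have hc0 : (c : ℝ) ≠ 0 := by positivity
  have hcc : (0:ℝ) < c := by positivity
  constructor
  · rintro ⟨s, hcs, hclique⟩
    obtain ⟨t, hts, htc⟩ := s.exists_subset_card_eq hcs
    have htcl : G.IsClique (t : Set (Fin n)) :=
      hclique.subset (Finset.coe_subset.2 hts)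
    set y : Fin n → ℝ := fun k => if k ∈ t then (c : ℝ)⁻¹ else 0 with hy
    have hmem : y ∈ stdSimplex ℝ (Fin n) := by
      constructor
      · intro x; simp only [hy]; split <;> positivity
      · simp only [hy, Finset.sum_ite_mem, Finset.univ_inter, Finset.sum_const,
          nsmul_eq_mul, htc]
        field_simp
    refine ⟨y, hmem, ?_⟩
    set A := G.adjMatrix ℝ with hA
    have h1 : ∀ i, ∑ j, A i j * y i * y j = ∑ j ∈ t, A i j * y i * (c:ℝ)⁻¹ := by
      intro i
      rw [← Finset.sum_subset (Finset.subset_univ t) (fun j _ hj => by simp [hy, hj])]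
      exact Finset.sum_congr rfl fun j hj => by simp [hy, hj]
    have h2 : ∑ i, ∑ j, A i j * y i * y j
        = ∑ i ∈ t, ∑ j ∈ t, A i j * (c:ℝ)⁻¹ * (c:ℝ)⁻¹ := by
      simp only [h1]
      rw [← Finset.sum_subset (Finset.subset_univ t)
        (fun i _ hi => by simp [hy, hi])]
      refine Finset.sum_congr rfl fun i hi => Finset.sum_congr rfl fun j hj => by
        simp [hy, hi]
    have hAval : ∀ i ∈ t, ∀ j ∈ t, A i j = if i = j then 0 else 1 := by
      intro i hi j hj
      by_cases h : i = j
      · subst h; simp [hA]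
      · have : G.Adj i j := htcl (Finset.mem_coe.2 hi) (Finset.mem_coe.2 hj) h
        simp [hA, this, h]
    have h3 : ∑ i ∈ t, ∑ j ∈ t, A i j = (c : ℝ) * ((c:ℝ) - 1) := by
      have hinner : ∀ i ∈ t, ∑ j ∈ t, A i j = (c : ℝ) - 1 := by
        intro i hi
        calc ∑ j ∈ t, A i j = ∑ j ∈ t, ((1:ℝ) - if i = j then 1 else 0) := by
              refine Finset.sum_congr rfl fun j hj => ?_
              rw [hAval i hi j hj]; split <;> norm_num
          _ = (t.card : ℝ) - 1 := by
              rw [Finset.sum_sub_distrib, Finset.sum_const, Finset.sum_ite_eq t i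
                (fun _ => (1:ℝ)), if_pos hi]
              simp
          _ = (c : ℝ) - 1 := by rw [htc]
      rw [Finset.sum_congr rfl hinner, Finset.sum_const, htc]
      simp [mul_comm]
    have h4 : ∑ i ∈ t, ∑ j ∈ t, A i j * (c:ℝ)⁻¹ * (c:ℝ)⁻¹
        = (∑ i ∈ t, ∑ j ∈ t, A i j) * (c:ℝ)⁻¹ * (c:ℝ)⁻¹ := by
      simp [Finset.sum_mul]
    have h5 : (c:ℝ) * ((c:ℝ) - 1) * (c:ℝ)⁻¹ * (c:ℝ)⁻¹ = 1 - 1 / (c:ℝ) := by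
      field_simp
    rw [h2, h4, h3, h5]
  · rintro ⟨y, hy, hle⟩
    obtain ⟨hy0, hy1⟩ := hy
    obtain ⟨s, hs1, hs2, hs3⟩ := ms_aux G (Finset.univ.filter fun i => y i ≠ 0).card
      y hy0 hy1 le_rfl
    refine ⟨s, ?_, hs1⟩
    have hsc : (0:ℝ) < s.card := by exact_mod_cast hs2
    have h5 : 1 / (s.card : ℝ) ≤ 1 / (c : ℝ) := by linarith [le_trans hle hs3]
    rw [div_le_div_iff₀ hsc hcc] at h5
    have : (c:ℝ) ≤ s.card := by linarith
    exact_mod_cast this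
end

section
/- Let M, N ≥ 1 and δ ≥ 0. Let 𝒩 be a finite nonempty set of unit vectors in ℂ^M which is a δ-net of the unit sphere of ℂ^M: for every unit vector x ∈ ℂ^M there exists x_i ∈ 𝒩 with ‖x − x_i‖₂ ≤ δ. Let A be a Hermitian complex matrix indexed by (Fin M) × (Fin N). Let m* be the maximum of (a⊗b)ᴴ A (a⊗b) over unit vectors a ∈ ℂ^M and b ∈ ℂ^N, and let m̃ be the maximum of (x_i⊗b)ᴴ A (x_i⊗b) over x_i ∈ 𝒩 and unit vectors b ∈ ℂ^N (both maxima exist by compactness). Then m̃ ≤ m* ≤ m̃ + 2δ·‖A‖₂, where ‖A‖₂ = √(tr(AᴴA)) is the Frobenius norm. -/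
open scoped Matrix BigOperators

/-- The tensor (Kronecker) product of two vectors. -/
def kvec {M N : ℕ} (a : Fin M → ℂ) (b : Fin N → ℂ) : Fin M × Fin N → ℂ :=
  fun p => a p.1 * b p.2

lemma cs_dot {n : Type*} [Fintype n] (x y : n → ℂ) :
    ‖star x ⬝ᵥ y‖ ≤
      Real.sqrt (∑ i, Complex.normSq (x i)) * Real.sqrt (∑ i, Complex.normSq (y i)) := by
  let x' : EuclideanSpace ℂ n := (WithLp.equiv 2 (n → ℂ)).symm x
  let y' : EuclideanSpace ℂ n := (WithLp.equiv 2 (n → ℂ)).symm y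
  have h1 : (inner ℂ x' y' : ℂ) = star x ⬝ᵥ y := by
    simp [dotProduct, PiLp.inner_apply, x', y', RCLike.inner_apply, mul_comm]
  have h2 := norm_inner_le_norm (𝕜 := ℂ) x' y'
  rw [h1] at h2
  have hx : ‖x'‖ = Real.sqrt (∑ i, Complex.normSq (x i)) := by
    simp [EuclideanSpace.norm_eq, Complex.sq_norm, x']
  have hy : ‖y'‖ = Real.sqrt (∑ i, Complex.normSq (y i)) := by
    simp [EuclideanSpace.norm_eq, Complex.sq_norm, y']
  rw [hx, hy] at h2
  simpa using h2

lemma frob_eq {n : Type*} [Fintype n] (A : Matrix n n ℂ) :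
    frobNorm A = Real.sqrt (∑ i, ∑ j, Complex.normSq (A i j)) := by
  unfold frobNorm
  congr 1
  simp only [Matrix.trace, Matrix.diag, Matrix.mul_apply, Matrix.conjTranspose_apply]
  rw [Complex.re_sum]
  rw [Finset.sum_comm]
  congr 1; funext i
  rw [Complex.re_sum]
  congr 1; funext j
  rw [Complex.star_def, mul_comm, Complex.mul_conj]
  simp

lemma mulVec_bound {n : Type*} [Fintype n] (A : Matrix n n ℂ) (y : n → ℂ) :
    Real.sqrt (∑ i, Complex.normSq ((A.mulVec y) i)) ≤
      frobNorm A * Real.sqrt (∑ j, Complex.normSq (y j)) := by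
  rw [frob_eq, ← Real.sqrt_mul (x := ∑ i, ∑ j, Complex.normSq (A i j)) (Finset.sum_nonneg fun _ _ => Finset.sum_nonneg fun _ _ => Complex.normSq_nonneg _)]
  apply Real.sqrt_le_sqrt
  rw [Finset.sum_mul]
  apply Finset.sum_le_sum
  intro i _
  have h := cs_dot (fun j => star (A i j)) y
  have he : star (fun j => star (A i j)) ⬝ᵥ y = (A.mulVec y) i := by
    simp [Matrix.mulVec, dotProduct]
  rw [he] at h
  have h2 : Complex.normSq ((A.mulVec y) i) = ‖(A.mulVec y) i‖^2 :=
    (Complex.sq_norm _).symm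
  rw [h2]
  calc ‖(A.mulVec y) i‖^2
      ≤ (Real.sqrt (∑ j, Complex.normSq (star (A i j))) * Real.sqrt (∑ j, Complex.normSq (y j)))^2 := by
        apply pow_le_pow_left₀ (norm_nonneg _) h
    _ = (∑ j, Complex.normSq (A i j)) * ∑ j, Complex.normSq (y j) := by
        rw [mul_pow, Real.sq_sqrt (Finset.sum_nonneg fun _ _ => Complex.normSq_nonneg _), Real.sq_sqrt (Finset.sum_nonneg fun _ _ => Complex.normSq_nonneg _)]
        simp

lemma quad_bound {n : Type*} [Fintype n] (A : Matrix n n ℂ) (x y : n → ℂ) :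
    |((star x) ⬝ᵥ A.mulVec y).re| ≤
      frobNorm A * Real.sqrt (∑ i, Complex.normSq (x i)) * Real.sqrt (∑ i, Complex.normSq (y i)) := by
  calc |((star x) ⬝ᵥ A.mulVec y).re| ≤ ‖(star x) ⬝ᵥ A.mulVec y‖ :=
        Complex.abs_re_le_norm _
    _ ≤ Real.sqrt (∑ i, Complex.normSq (x i)) * Real.sqrt (∑ i, Complex.normSq ((A.mulVec y) i)) :=
        cs_dot _ _
    _ ≤ Real.sqrt (∑ i, Complex.normSq (x i)) * (frobNorm A * Real.sqrt (∑ i, Complex.normSq (y i))) :=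
        mul_le_mul_of_nonneg_left (mulVec_bound A y) (Real.sqrt_nonneg _)
    _ = _ := by ring

lemma kvec_sum {M N : ℕ} (a : Fin M → ℂ) (b : Fin N → ℂ) :
    ∑ p, Complex.normSq (kvec a b p) =
      (∑ j, Complex.normSq (a j)) * ∑ l, Complex.normSq (b l) := by
  rw [Finset.sum_mul_sum]
  rw [Fintype.sum_prod_type]
  simp [kvec, Complex.normSq_mul]

lemma kvec_sub {M N : ℕ} (a v : Fin M → ℂ) (b : Fin N → ℂ) :
    kvec a b - kvec v b = kvec (a - v) b := by
  funext p; simp [kvec, sub_mul]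

theorem net_maximum_error_bound
    (M N : ℕ) (hM : 1 ≤ M) (hN : 1 ≤ N) (δ : ℝ) (hδ : 0 ≤ δ)
    (𝒩 : Finset (Fin M → ℂ)) (h𝒩ne : 𝒩.Nonempty)
    (h𝒩unit : ∀ v ∈ 𝒩, unitVec v)
    (h𝒩net : ∀ x : Fin M → ℂ, unitVec x →
      ∃ v ∈ 𝒩, Real.sqrt (∑ j, Complex.normSq (x j - v j)) ≤ δ)
    (A : Matrix (Fin M × Fin N) (Fin M × Fin N) ℂ) (hA : A.IsHermitian)
    (mstar mtil : ℝ)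
    (hmstar : IsGreatest {r : ℝ | ∃ a b, unitVec a ∧ unitVec b ∧
        r = ((star (kvec a b)) ⬝ᵥ A.mulVec (kvec a b)).re} mstar)
    (hmtil : IsGreatest {r : ℝ | ∃ v ∈ 𝒩, ∃ b, unitVec b ∧
        r = ((star (kvec v b)) ⬝ᵥ A.mulVec (kvec v b)).re} mtil) :
    mtil ≤ mstar ∧ mstar ≤ mtil + 2 * δ * frobNorm A := by
  constructor
  · obtain ⟨v, hv, b, hb, rfl⟩ := hmtil.1
    exact hmstar.2 ⟨v, b, h𝒩unit v hv, hb, rfl⟩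
  · obtain ⟨a, b, ha, hb, hmeq⟩ := hmstar.1
    obtain ⟨v, hv, hdist⟩ := h𝒩net a ha
    have hvu : unitVec v := h𝒩unit v hv
    set x := kvec a b with hxdef
    set w := kvec v b with hwdef
    -- norms
    have hxn : Real.sqrt (∑ i, Complex.normSq (x i)) = 1 := by
      rw [hxdef, kvec_sum, ha, hb]; simp
    have hwn : Real.sqrt (∑ i, Complex.normSq (w i)) = 1 := by
      rw [hwdef, kvec_sum, hvu, hb]; simp
    have hdn : Real.sqrt (∑ i, Complex.normSq ((x - w) i)) ≤ δ := by
      rw [hxdef, hwdef, kvec_sub, kvec_sum, hb, mul_one]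
      simpa [Pi.sub_apply] using hdist
    have hfrob : 0 ≤ frobNorm A := Real.sqrt_nonneg _
    -- decomposition
    have hdec : ((star x) ⬝ᵥ A.mulVec x).re - ((star w) ⬝ᵥ A.mulVec w).re =
        ((star x) ⬝ᵥ A.mulVec (x - w)).re + ((star (x - w)) ⬝ᵥ A.mulVec w).re := by
      have : (star x) ⬝ᵥ A.mulVec x - (star w) ⬝ᵥ A.mulVec w =
          (star x) ⬝ᵥ A.mulVec (x - w) + (star (x - w)) ⬝ᵥ A.mulVec w := by
        simp only [Matrix.mulVec_sub, dotProduct_sub, star_sub, sub_dotProduct]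
        ring
      have := congrArg Complex.re this
      simpa [Complex.sub_re, Complex.add_re] using this
    have h1 : |((star x) ⬝ᵥ A.mulVec (x - w)).re| ≤ frobNorm A * δ := by
      have h := quad_bound A x (x - w)
      rw [hxn] at h
      calc |((star x) ⬝ᵥ A.mulVec (x - w)).re| ≤ frobNorm A * 1 * Real.sqrt (∑ i, Complex.normSq ((x - w) i)) := h
        _ ≤ frobNorm A * δ := by
            rw [mul_one]
            exact mul_le_mul_of_nonneg_left hdn hfrob
    have h2 : |((star (x - w)) ⬝ᵥ A.mulVec w).re| ≤ frobNorm A * δ := by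
      have h := quad_bound A (x - w) w
      rw [hwn, mul_one] at h
      calc |((star (x - w)) ⬝ᵥ A.mulVec w).re| ≤ frobNorm A * Real.sqrt (∑ i, Complex.normSq ((x - w) i)) := h
        _ ≤ frobNorm A * δ := mul_le_mul_of_nonneg_left hdn hfrob
    have hwle : ((star w) ⬝ᵥ A.mulVec w).re ≤ mtil :=
      hmtil.2 ⟨v, hv, b, hb, rfl⟩
    have ha1 := abs_le.mp h1
    have ha2 := abs_le.mp h2
    rw [hmeq]
    linarith [ha1.2, ha2.2]
end

section
/- Let ρ be a density matrix on ℂ^M ⊗ ℂ^N with ρ ∉ S_{M,N}. Then there exists an entanglement witness detecting ρ: a Hermitian complex matrix A indexed by (Fin M) × (Fin N) such that for every σ ∈ S_{M,N}, Re tr(Aσ) < Re tr(Aρ). (For Hermitian A and Hermitian σ, tr(Aσ) is in fact real.) -/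
open scoped Matrix Kronecker BigOperators ComplexOrder

open Module in
/-- The convex hull of a compact set in a finite-dimensional normed space is compact. -/
lemma isCompact_convexHull_of_isCompact {E : Type*} [NormedAddCommGroup E] [NormedSpace ℝ E]
    [FiniteDimensional ℝ E] {s : Set E} (hs : IsCompact s) :
    IsCompact (convexHull ℝ s) := by
  rcases s.eq_empty_or_nonempty with rfl | ⟨x₀, hx₀⟩
  · simpa [convexHull_empty] using isCompact_empty
  set n := finrank ℝ E + 1 with hn
  let φ : (Fin n → ℝ) × (Fin n → E) → E := fun p => ∑ i, p.1 i • p.2 i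
  have hφ : Continuous φ := by
    apply continuous_finset_sum
    intro i _
    exact ((continuous_apply i).comp continuous_fst).smul
      ((continuous_apply i).comp continuous_snd)
  have hK : IsCompact ((stdSimplex ℝ (Fin n)) ×ˢ (Set.univ.pi fun _ : Fin n => s)) :=
    IsCompact.prod (isCompact_stdSimplex (𝕜 := ℝ) (ι := Fin n)) (isCompact_univ_pi fun _ => hs)
  have heq : convexHull ℝ s
      = φ '' ((stdSimplex ℝ (Fin n)) ×ˢ (Set.univ.pi fun _ : Fin n => s)) := by
    apply Set.Subset.antisymm
    · intro x hx
      obtain ⟨ι, hι, z, w, hzs, hai, hw0, hw1, hwz⟩ :=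
        eq_pos_convex_span_of_mem_convexHull hx
      letI := hι
      have hcard : Fintype.card ι ≤ n := by
        have h1 := hai.card_le_finrank_succ
        have h2 := Submodule.finrank_le (vectorSpan ℝ (Set.range z))
        omega
      obtain ⟨e⟩ : Nonempty (ι ↪ Fin n) :=
        Function.Embedding.nonempty_of_card_le (by simpa using hcard)
      haveI : DecidablePred fun j : Fin n => ∃ i, e i = j := Classical.decPred _
      let w' : Fin n → ℝ := fun j => ∑ i ∈ Finset.univ.filter (fun i => e i = j), w i
      let z' : Fin n → E := fun j => if h : ∃ i, e i = j then z h.choose else x₀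
      have hz'e : ∀ i, z' (e i) = z i := by
        intro i
        have h : ∃ i', e i' = e i := ⟨i, rfl⟩
        have : h.choose = i := e.injective h.choose_spec
        simp only [z', dif_pos h, this]
      refine ⟨(w', z'), ⟨⟨fun j => ?_, ?_⟩, fun j _ => ?_⟩, ?_⟩
      · exact Finset.sum_nonneg fun i _ => (hw0 i).le
      · rw [← hw1]
        simp only [w']
        exact Finset.sum_fiberwise_of_maps_to (s := Finset.univ) (t := Finset.univ)
          (fun i _ => Finset.mem_univ (e i)) w
      · simp only [z']
        split
        · next h => exact hzs (Set.mem_range_self h.choose)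
        · exact hx₀
      · show ∑ j, w' j • z' j = x
        rw [← hwz]
        have : ∀ j : Fin n, w' j • z' j
            = ∑ i ∈ Finset.univ.filter (fun i => e i = j), w i • z i := by
          intro j
          rw [Finset.sum_smul]
          apply Finset.sum_congr rfl
          intro i hi
          rw [Finset.mem_filter] at hi
          rw [← hi.2, hz'e]
        rw [Finset.sum_congr rfl fun j _ => this j]
        exact Finset.sum_fiberwise_of_maps_to (s := Finset.univ) (t := Finset.univ)
          (fun i _ => Finset.mem_univ (e i)) (fun i => w i • z i)
    · rintro x ⟨⟨w, z⟩, ⟨⟨hw0, hw1⟩, hz⟩, rfl⟩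
      exact (convex_convexHull ℝ s).sum_mem (fun i _ => hw0 i) hw1
        (fun i _ => subset_convexHull ℝ s (hz i (Set.mem_univ i)))
  rw [heq]
  exact hK.image hφ

attribute [local instance] Matrix.normedAddCommGroup Matrix.normedSpace

lemma sepSet_isCompact (M N : ℕ) : IsCompact (SepSet M N) := by
  apply isCompact_convexHull_of_isCompact
  -- the set of pure product states is the image of a compact set
  have h1 : IsCompact {a : Fin M → ℂ | unitVec a} := by
    have hc : Continuous fun a : Fin M → ℂ => ∑ j, Complex.normSq (a j) :=
      continuous_finset_sum _ fun j _ => Complex.continuous_normSq.comp (continuous_apply j)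
    apply Metric.isCompact_of_isClosed_isBounded
    · exact isClosed_eq hc continuous_const
    · rw [Metric.isBounded_iff_subset_closedBall 0]
      refine ⟨1, fun a ha => ?_⟩
      simp only [Metric.mem_closedBall, dist_zero_right]
      rw [pi_norm_le_iff_of_nonneg zero_le_one]
      intro j
      have h2 : Complex.normSq (a j) ≤ 1 := by
        rw [← ha]
        exact Finset.single_le_sum (fun k _ => Complex.normSq_nonneg (a k))
          (Finset.mem_univ j)
      have := Complex.normSq_eq_norm_sq (a j)
      rw [← Complex.sq_norm] at h2
      nlinarith [norm_nonneg (a j)]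
  have h1' : IsCompact {b : Fin N → ℂ | unitVec b} := by
    have hc : Continuous fun b : Fin N → ℂ => ∑ j, Complex.normSq (b j) :=
      continuous_finset_sum _ fun j _ => Complex.continuous_normSq.comp (continuous_apply j)
    apply Metric.isCompact_of_isClosed_isBounded
    · exact isClosed_eq hc continuous_const
    · rw [Metric.isBounded_iff_subset_closedBall 0]
      refine ⟨1, fun b hb => ?_⟩
      simp only [Metric.mem_closedBall, dist_zero_right]
      rw [pi_norm_le_iff_of_nonneg zero_le_one]
      intro j
      have h2 : Complex.normSq (b j) ≤ 1 := by
        rw [← hb]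
        exact Finset.single_le_sum (fun k _ => Complex.normSq_nonneg (b k))
          (Finset.mem_univ j)
      rw [← Complex.sq_norm] at h2
      nlinarith [norm_nonneg (b j)]
  have himg : { X : Matrix (Fin M × Fin N) (Fin M × Fin N) ℂ |
      ∃ a b, unitVec a ∧ unitVec b ∧ X = prodState a b }
      = (fun p : (Fin M → ℂ) × (Fin N → ℂ) => prodState p.1 p.2) ''
        ({a | unitVec a} ×ˢ {b | unitVec b}) := by
    ext X
    constructor
    · rintro ⟨a, b, ha, hb, rfl⟩; exact ⟨(a, b), ⟨ha, hb⟩, rfl⟩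
    · rintro ⟨⟨a, b⟩, ⟨ha, hb⟩, rfl⟩; exact ⟨a, b, ha, hb, rfl⟩
  rw [himg]
  apply (h1.prod h1').image
  apply continuous_pi
  intro p
  apply continuous_pi
  intro q
  show Continuous fun ab : (Fin M → ℂ) × (Fin N → ℂ) =>
    (ab.1 p.1 * (starRingEnd ℂ) (ab.1 q.1)) * (ab.2 p.2 * (starRingEnd ℂ) (ab.2 q.2))
  have c1 : Continuous fun ab : (Fin M → ℂ) × (Fin N → ℂ) => ab.1 p.1 :=
    (continuous_apply p.1).comp continuous_fst
  have c2 : Continuous fun ab : (Fin M → ℂ) × (Fin N → ℂ) => ab.1 q.1 :=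
    (continuous_apply q.1).comp continuous_fst
  have c3 : Continuous fun ab : (Fin M → ℂ) × (Fin N → ℂ) => ab.2 p.2 :=
    (continuous_apply p.2).comp continuous_snd
  have c4 : Continuous fun ab : (Fin M → ℂ) × (Fin N → ℂ) => ab.2 q.2 :=
    (continuous_apply q.2).comp continuous_snd
  exact (c1.mul (Complex.continuous_conj.comp c2)).mul
    (c3.mul (Complex.continuous_conj.comp c4))

lemma sepSet_isHermitian {M N : ℕ} {σ : Matrix (Fin M × Fin N) (Fin M × Fin N) ℂ}
    (hσ : σ ∈ SepSet M N) : σ.IsHermitian := by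
  have : SepSet M N ⊆ {X : Matrix (Fin M × Fin N) (Fin M × Fin N) ℂ | X.IsHermitian} := by
    apply convexHull_min
    · rintro X ⟨a, b, _, _, rfl⟩
      show (prodState a b).IsHermitian
      ext ⟨i, j⟩ ⟨k, l⟩
      simp only [prodState, outer, Matrix.conjTranspose_apply, Matrix.kroneckerMap_apply,
        Matrix.vecMulVec_apply, star_mul', Complex.star_def, Complex.conj_conj]
      ring
    · intro X hX Y hY a b ha hb hab
      show ((a • X + b • Y)ᴴ = a • X + b • Y)
      have hX' : Xᴴ = X := hX
      have hY' : Yᴴ = Y := hY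
      rw [Matrix.conjTranspose_add, Matrix.conjTranspose_smul, Matrix.conjTranspose_smul,
        hX', hY', star_trivial, star_trivial]
  exact this hσ

theorem exists_entanglement_witness
    (M N : ℕ) (hM : 1 ≤ M) (hN : 1 ≤ N)
    (ρ : Matrix (Fin M × Fin N) (Fin M × Fin N) ℂ)
    (hρ : ρ.PosSemidef ∧ ρ.trace = 1) (hent : ρ ∉ SepSet M N) :
    ∃ A : Matrix (Fin M × Fin N) (Fin M × Fin N) ℂ, A.IsHermitian ∧
      ∀ σ ∈ SepSet M N, (Matrix.trace (A * σ)).re < (Matrix.trace (A * ρ)).re := by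
  obtain ⟨hpsd, _⟩ := hρ
  haveI : LocallyConvexSpace ℝ (Matrix (Fin M × Fin N) (Fin M × Fin N) ℂ) :=
    NormedSpace.toLocallyConvexSpace
  obtain ⟨f, u, hfs, hfρ⟩ := geometric_hahn_banach_closed_point
    (convex_convexHull ℝ _) (sepSet_isCompact M N).isClosed hent
  -- build the matrix representing `f` via `X ↦ Re tr (A₀ X)`
  let K := Fin M × Fin N
  let A₀ : Matrix K K ℂ := fun p q =>
    (f (Matrix.single q p 1) : ℂ) - Complex.I * (f (Matrix.single q p Complex.I))
  have key : ∀ X : Matrix K K ℂ, (Matrix.trace (A₀ * X)).re = f X := by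
    intro X
    have htr : Matrix.trace (A₀ * X) = ∑ p : K, ∑ q : K, A₀ p q * X q p := by
      simp [Matrix.trace, Matrix.mul_apply, Matrix.diag]
    rw [htr]
    have hre : (∑ p : K, ∑ q : K, A₀ p q * X q p).re
        = ∑ p : K, ∑ q : K, (f (Matrix.single q p 1) * (X q p).re
            + f (Matrix.single q p Complex.I) * (X q p).im) := by
      rw [Complex.re_sum]
      apply Finset.sum_congr rfl
      intro p _
      rw [Complex.re_sum]
      apply Finset.sum_congr rfl
      intro q _
      simp only [A₀, Complex.sub_re, Complex.mul_re, Complex.mul_im, Complex.ofReal_re,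
        Complex.ofReal_im, Complex.I_re, Complex.I_im, Complex.sub_im]
      ring
    rw [hre]
    -- now expand f X
    conv_rhs => rw [Matrix.matrix_eq_sum_single X]
    rw [map_sum]
    rw [Finset.sum_comm]
    apply Finset.sum_congr rfl
    intro p _
    rw [map_sum]
    apply Finset.sum_congr rfl
    intro q _
    -- f (stdBasisMatrix q p (X q p)) = f(E 1) * re + f(E I) * im
    have hdecomp : Matrix.single p q (X p q)
        = (X p q).re • Matrix.single p q 1
          + (X p q).im • Matrix.single p q Complex.I := by
      rw [Matrix.smul_single, Matrix.smul_single,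
        ← Matrix.single_add]
      rw [Complex.real_smul, Complex.real_smul, mul_one, Complex.re_add_im]
    rw [hdecomp, map_add, map_smul, map_smul, smul_eq_mul, smul_eq_mul]
    ring
  -- Hermitian part
  set A : Matrix K K ℂ := (2⁻¹ : ℝ) • (A₀ + A₀ᴴ) with hA
  have hherm : A.IsHermitian := by
    show Aᴴ = A
    rw [hA, Matrix.conjTranspose_smul, Matrix.conjTranspose_add,
      Matrix.conjTranspose_conjTranspose, star_trivial, add_comm]
  have keyH : ∀ X : Matrix K K ℂ, X.IsHermitian → (Matrix.trace (A * X)).re = f X := by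
    intro X hX
    have h1 : Matrix.trace (A₀ᴴ * X) = star (Matrix.trace (A₀ * X)) := by
      have : A₀ᴴ * X = (Xᴴ * A₀)ᴴ := by
        rw [Matrix.conjTranspose_mul, Matrix.conjTranspose_conjTranspose]
      rw [this, Matrix.trace_conjTranspose, Matrix.trace_mul_comm, hX.eq]
    have : Matrix.trace (A * X) = (2⁻¹ : ℝ) • (Matrix.trace (A₀ * X)
        + star (Matrix.trace (A₀ * X))) := by
      rw [hA, Matrix.smul_mul, Matrix.trace_smul, Matrix.add_mul, Matrix.trace_add, h1]
    rw [this]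
    have hz : ∀ z : ℂ, ((2⁻¹ : ℝ) • (z + star z)).re = z.re := by
      intro z
      simp [Complex.real_smul, Complex.add_re, Complex.mul_re]
      ring
    rw [hz, key]
  refine ⟨A, hherm, fun σ hσ => ?_⟩
  rw [keyH σ (sepSet_isHermitian hσ), keyH ρ hpsd.isHermitian]
  exact lt_trans (hfs σ hσ) hfρ
end

section
/- Let A be a Hermitian complex matrix indexed by (Fin M) × (Fin N). Then the maximum of Re tr(Aσ) over σ ∈ S_{M,N} exists and equals the maximum over unit vectors a ∈ ℂ^M and b ∈ ℂ^N of the (real) quadratic form (a⊗b)ᴴ A (a⊗b), where a⊗b denotes the vector with components (a⊗b)_{(j,l)} = a_j · b_l. -/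
open scoped Matrix Kronecker BigOperators

lemma trace_prodState {M N : ℕ} (A : Matrix (Fin M × Fin N) (Fin M × Fin N) ℂ)
    (a : Fin M → ℂ) (b : Fin N → ℂ) :
    Matrix.trace (A * prodState a b) = star (kvec a b) ⬝ᵥ A.mulVec (kvec a b) := by
  have h : prodState a b = Matrix.vecMulVec (kvec a b) (star (kvec a b)) := by
    ext ⟨j,l⟩ ⟨k,m⟩
    simp [prodState, outer, kvec, Matrix.vecMulVec_apply, map_mul]
    ring
  rw [h]
  simp only [Matrix.trace, Matrix.diag, Matrix.mul_apply, Matrix.vecMulVec_apply,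
    dotProduct, Matrix.mulVec, Pi.star_apply, Finset.mul_sum]
  exact Finset.sum_congr rfl fun i _ => Finset.sum_congr rfl fun j _ => by ring

lemma unit_exists {M : ℕ} (hM : 1 ≤ M) : ∃ a : Fin M → ℂ, unitVec a := by
  refine ⟨fun j => if j = ⟨0, hM⟩ then 1 else 0, ?_⟩
  simp [unitVec, apply_ite Complex.normSq, Finset.sum_ite_eq]

lemma unit_compact {M : ℕ} : IsCompact {a : Fin M → ℂ | unitVec a} := by
  rw [Metric.isCompact_iff_isClosed_bounded]
  constructor
  · have hc : Continuous fun a : Fin M → ℂ => ∑ j, Complex.normSq (a j) :=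
      continuous_finset_sum _ fun j _ => Complex.continuous_normSq.comp (continuous_apply j)
    exact isClosed_eq hc continuous_const
  · rw [Metric.isBounded_iff_subset_closedBall 0]
    refine ⟨1, fun a ha => ?_⟩
    simp only [Metric.mem_closedBall, dist_zero_right]
    rw [pi_norm_le_iff_of_nonneg zero_le_one]
    intro j
    have h1 : Complex.normSq (a j) ≤ 1 := by
      have := ha
      simp only [Set.mem_setOf_eq, unitVec] at this
      calc Complex.normSq (a j) ≤ ∑ k, Complex.normSq (a k) :=
            Finset.single_le_sum (fun k _ => Complex.normSq_nonneg _) (Finset.mem_univ j)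
        _ = 1 := this
    have h2 : ‖a j‖ ^ 2 = Complex.normSq (a j) := by
      rw [Complex.normSq_eq_norm_sq]
    nlinarith [norm_nonneg (a j)]

theorem max_over_separable_eq_max_over_product_vectors
    (M N : ℕ) (hM : 1 ≤ M) (hN : 1 ≤ N)
    (A : Matrix (Fin M × Fin N) (Fin M × Fin N) ℂ) (hA : A.IsHermitian) :
    ∃ v : ℝ,
      IsGreatest {r : ℝ | ∃ σ ∈ SepSet M N, r = (Matrix.trace (A * σ)).re} v ∧
      IsGreatest {r : ℝ | ∃ a b, unitVec a ∧ unitVec b ∧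
          r = ((star (kvec a b)) ⬝ᵥ A.mulVec (kvec a b)).re} v := by
  classical
  set g : ((Fin M → ℂ) × (Fin N → ℂ)) → ℝ :=
    fun p => ((star (kvec p.1 p.2)) ⬝ᵥ A.mulVec (kvec p.1 p.2)).re with hg_def
  have hg : Continuous g := by
    simp only [hg_def, dotProduct, Matrix.mulVec, kvec, Pi.star_apply]
    fun_prop
  set K : Set ((Fin M → ℂ) × (Fin N → ℂ)) :=
    {a | unitVec a} ×ˢ {b | unitVec b} with hK_def
  have hK : IsCompact K := unit_compact.prod unit_compact
  have hKne : K.Nonempty := by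
    obtain ⟨a, ha⟩ := unit_exists hM
    obtain ⟨b, hb⟩ := unit_exists hN
    exact ⟨(a, b), ha, hb⟩
  obtain ⟨p0, hp0K, hmax⟩ := hK.exists_isMaxOn hKne hg.continuousOn
  refine ⟨g p0, ?_, ?_⟩
  · constructor
    · refine ⟨prodState p0.1 p0.2, ?_, ?_⟩
      · exact subset_convexHull ℝ _ ⟨p0.1, p0.2, hp0K.1, hp0K.2, rfl⟩
      · rw [trace_prodState]
    · rintro r ⟨σ, hσ, rfl⟩
      set f : Matrix (Fin M × Fin N) (Fin M × Fin N) ℂ →ₗ[ℝ] ℝ :=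
        { toFun := fun σ => (Matrix.trace (A * σ)).re
          map_add' := fun x y => by simp [Matrix.mul_add]
          map_smul' := fun r x => by
            simp [Matrix.mul_smul, Complex.real_smul] } with hf_def
      have hsub : SepSet M N ⊆ f ⁻¹' Set.Iic (g p0) := by
        apply convexHull_min _ ((convex_Iic (g p0)).linear_preimage f)
        rintro X ⟨a, b, ha, hb, rfl⟩
        simp only [Set.mem_preimage, Set.mem_Iic]
        have hmem : (a, b) ∈ K := ⟨ha, hb⟩
        have : f (prodState a b) = g (a, b) := by
          simp only [hf_def, LinearMap.coe_mk, AddHom.coe_mk, hg_def]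
          rw [trace_prodState]
        rw [this]
        exact hmax hmem
      exact hsub hσ
  · constructor
    · exact ⟨p0.1, p0.2, hp0K.1, hp0K.2, rfl⟩
    · rintro r ⟨a, b, ha, hb, rfl⟩
      have hmem : (a, b) ∈ K := ⟨ha, hb⟩
      simpa only [hg_def, Set.mem_setOf_eq] using hmax hmem
end
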